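/- arXiv:0908.0042 — 5 statements merged into one kernel-verified Lean document; each statement's English description precedes it below -/
import Mathlib

section
/- Kung's matroid construction: Let G be a matrix over a field with row index set S and column index set T (disjoint finite sets). Define r on subsets of E = S ∪ T by r(s ∪ t) = rank(G(s, T∖t)) + |t| for s ⊆ S, t ⊆ T. Then r is the rank function of a matroid on E; that is, r(A) ≤ |A| for all A ⊆ E, r is monotone, and r is submodular: r(A∪B) + r(A∩B) ≤ r(A) + r(B) for all A,B ⊆ E. -/
/-- Rank of the submatrix of `G` with rows in `U` and columns in `V`. -/
noncomputable def rk {F S T : Type*} [Field F] [Fintype S] [Fintype T]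
    (G : Matrix S T F) (U : Finset S) (V : Finset T) : ℕ :=
  (G.submatrix (fun i : U => (i : S)) (fun j : V => (j : T))).rank

/-- Kung rank function on the disjoint union of rows and columns. -/
noncomputable def kungRank {F S T : Type*} [Field F] [Fintype S] [Fintype T]
    [DecidableEq T] (G : Matrix S T F) (A : Finset (S ⊕ T)) : ℕ :=
  rk G A.toLeft A.toRightᶜ + A.toRight.card

open Submodule Module Set

/-- The representing vectors of the Kung matroid: a row of `G` for elements of `S`,
a standard basis vector for elements of `T`. -/
noncomputable def kvec {F S T : Type*} [Field F] [Fintype S] [Fintype T] [DecidableEq T]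
    (G : Matrix S T F) : S ⊕ T → (T → F) :=
  Sum.elim (fun s => G s) (fun t => Pi.single t 1)

lemma kvec_image {F S T : Type*} [Field F] [Fintype S] [Fintype T] [DecidableEq T]
    (G : Matrix S T F) (A : Finset (S ⊕ T)) :
    kvec G '' (A : Set (S ⊕ T)) =
      (fun i => G i) '' (A.toLeft : Set S) ∪
        (fun j => (Pi.single j 1 : T → F)) '' (A.toRight : Set T) := by
  ext x
  constructor
  · rintro ⟨(a | a), ha, rfl⟩
    · exact Or.inl ⟨a, by simpa using ha, rfl⟩
    · exact Or.inr ⟨a, by simpa using ha, rfl⟩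
  · rintro (⟨a, ha, rfl⟩ | ⟨a, ha, rfl⟩)
    · exact ⟨Sum.inl a, by simpa using ha, rfl⟩
    · exact ⟨Sum.inr a, by simpa using ha, rfl⟩

/-- The key identity: the Kung rank of `A` is the dimension of the span of the
representing vectors of `A`. -/
lemma kungRank_eq_finrank {F S T : Type*} [Field F] [Fintype S] [Fintype T]
    [DecidableEq T] (G : Matrix S T F) (A : Finset (S ⊕ T)) :
    kungRank G A = finrank F (span F (kvec G '' (A : Set (S ⊕ T)))) := by
  classical
  set s : Finset S := A.toLeft with hs
  set t : Finset T := A.toRight with ht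
  -- restriction to the coordinates in tᶜ
  set π : (T → F) →ₗ[F] ((tᶜ : Finset T) → F) :=
    LinearMap.funLeft F F (fun j : (tᶜ : Finset T) => (j : T)) with hπ
  set U : Submodule F (T → F) := span F ((fun i => G i) '' (s : Set S)) with hU
  set K : Submodule F (T → F) :=
    span F ((fun j => (Pi.single j 1 : T → F)) '' (t : Set T)) with hK
  -- K is exactly the kernel of π
  have hKker : K = LinearMap.ker π := by
    apply le_antisymm
    · rw [hK, span_le]
      rintro x ⟨j, hj, rfl⟩
      simp only [SetLike.mem_coe, LinearMap.mem_ker]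
      ext ⟨i, hi⟩
      have hij : i ≠ j := by
        intro h; subst h
        exact (Finset.mem_compl.mp hi) hj
      simp [hπ, LinearMap.funLeft_apply, Pi.single_apply, hij]
    · intro f hf
      have hf' : ∀ i : T, i ∉ t → f i = 0 := by
        intro i hi
        have := congrFun (LinearMap.mem_ker.mp hf) ⟨i, Finset.mem_compl.mpr hi⟩
        simpa [hπ, LinearMap.funLeft_apply] using this
      have hfe : f = ∑ j ∈ t, f j • (Pi.single j 1 : T → F) := by
        funext i
        rw [Finset.sum_apply]
        simp only [Pi.smul_apply, Pi.single_apply, smul_eq_mul, mul_ite, mul_one, mul_zero]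
        rw [Finset.sum_ite_eq]
        by_cases hi : i ∈ t
        · simp [hi]
        · simp [hi, hf' i hi]
      rw [hfe]
      exact Submodule.sum_mem _ fun j hj =>
        Submodule.smul_mem _ _ (subset_span ⟨j, hj, rfl⟩)
  -- the kernel of π has dimension |t|
  have hπsurj : Function.Surjective π :=
    LinearMap.funLeft_surjective_of_injective F F _ Subtype.val_injective
  have hKdim : finrank F (LinearMap.ker π) = t.card := by
    have hrn := π.finrank_range_add_finrank_ker
    rw [LinearMap.range_eq_top.mpr hπsurj, finrank_top] at hrn
    rw [Module.finrank_fintype_fun_eq_card, Module.finrank_fintype_fun_eq_card,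
      Fintype.card_coe, Finset.card_compl] at hrn
    have hle : t.card ≤ Fintype.card T := (Finset.card_le_card (Finset.subset_univ t)).trans_eq
      (Finset.card_univ)
    omega
  -- split the span
  have hsplit : span F (kvec G '' (A : Set (S ⊕ T))) = U ⊔ K := by
    rw [kvec_image, span_union, hU, hK, hs, ht]
  -- rank-nullity for π restricted to U ⊔ K
  have hKle : LinearMap.ker π ≤ U ⊔ K := hKker ▸ le_sup_right
  have hrn2 := (π.comp (U ⊔ K).subtype).finrank_range_add_finrank_ker
  have hrange : LinearMap.range (π.comp (U ⊔ K).subtype) = (U ⊔ K).map π := by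
    rw [LinearMap.range_comp, Submodule.range_subtype]
  have hker2 : finrank F (LinearMap.ker (π.comp (U ⊔ K).subtype)) = t.card := by
    rw [LinearMap.ker_comp]
    rw [← hKdim]
    exact LinearEquiv.finrank_eq (Submodule.comapSubtypeEquivOfLe hKle)
  -- the image of the span under π
  have hmap : (U ⊔ K).map π = span F ((fun i => π (G i)) '' (s : Set S)) := by
    rw [Submodule.map_sup]
    have h1 : K.map π = ⊥ := by
      apply le_antisymm _ bot_le
      rw [Submodule.map_le_iff_le_comap]
      exact hKker.le
    rw [h1, sup_bot_eq, hU, Submodule.map_span, Set.image_image]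
  -- identify rk with the dimension of the mapped span
  have hrk : rk G s tᶜ = finrank F (span F ((fun i => π (G i)) '' (s : Set S))) := by
    have himg : (fun i => π (G i)) '' (s : Set S) =
        Set.range (G.submatrix (fun i : (s : Finset S) => (i : S))
          (fun j : (tᶜ : Finset T) => (j : T))) := by
      rw [Set.image_eq_range]; rfl
    unfold rk
    rw [Matrix.rank_eq_finrank_span_row, himg]; rfl
  -- assemble
  rw [hsplit, kungRank, ← hs, ← ht, hrk]
  rw [hrange, hker2, hmap] at hrn2
  omega

theorem kung_matroid {F S T : Type*} [Field F] [Fintype S] [Fintype T]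
    [DecidableEq S] [DecidableEq T] (G : Matrix S T F) :
    (∀ A : Finset (S ⊕ T), kungRank G A ≤ A.card) ∧
    (∀ A B : Finset (S ⊕ T), A ⊆ B → kungRank G A ≤ kungRank G B) ∧
    (∀ A B : Finset (S ⊕ T),
      kungRank G (A ∪ B) + kungRank G (A ∩ B) ≤ kungRank G A + kungRank G B) := by
  classical
  refine ⟨?_, ?_, ?_⟩
  · intro A
    rw [kungRank_eq_finrank]
    have h1 : kvec G '' (A : Set (S ⊕ T)) = ((A.image (kvec G) : Finset (T → F)) : Set (T → F)) := by
      simp [Finset.coe_image]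
    rw [h1]
    exact (finrank_span_finset_le_card (A.image (kvec G))).trans (Finset.card_image_le)
  · intro A B hAB
    rw [kungRank_eq_finrank, kungRank_eq_finrank]
    exact Submodule.finrank_mono
      (span_mono (Set.image_mono (Finset.coe_subset.mpr hAB)))
  · intro A B
    rw [kungRank_eq_finrank, kungRank_eq_finrank, kungRank_eq_finrank, kungRank_eq_finrank]
    have hsup : span F (kvec G '' ((A ∪ B : Finset (S ⊕ T)) : Set (S ⊕ T))) =
        span F (kvec G '' (A : Set (S ⊕ T))) ⊔ span F (kvec G '' (B : Set (S ⊕ T))) := by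
      rw [Finset.coe_union, Set.image_union, span_union]
    have hinf : span F (kvec G '' ((A ∩ B : Finset (S ⊕ T)) : Set (S ⊕ T))) ≤
        span F (kvec G '' (A : Set (S ⊕ T))) ⊓ span F (kvec G '' (B : Set (S ⊕ T))) := by
      refine le_inf ?_ ?_ <;>
        exact span_mono (Set.image_mono (by simp [Finset.coe_inter]))
    have heq := Submodule.finrank_sup_add_finrank_inf_eq
      (span F (kvec G '' (A : Set (S ⊕ T)))) (span F (kvec G '' (B : Set (S ⊕ T))))
    have hle := Submodule.finrank_mono (M := T → F) hinf
    rw [hsup]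
    omega
end

section
/- Main theorem (block-matrix transversal theorem): Let G be a matrix over a field whose row set is partitioned as S = S₁ ∪ ⋯ ∪ S_m and column set as T = T₁ ∪ ⋯ ∪ T_n. Given non-negative integers s₁,…,s_m, t₁,…,t_n with Σᵢ sᵢ = Σⱼ tⱼ = R, there exist subsets 𝐬ᵢ ⊆ Sᵢ with |𝐬ᵢ| = sᵢ and 𝐭ⱼ ⊆ Tⱼ with |𝐭ⱼ| = tⱼ such that the R×R submatrix G(⋃ᵢ 𝐬ᵢ, ⋃ⱼ 𝐭ⱼ) is nonsingular, if and only if for every I ⊆ {1,…,m} and K ⊆ {1,…,n}, rank(G(⋃_{i∈I} Sᵢ, ⋃_{k∈K} T_k)) ≥ Σ_{i∈I} sᵢ + Σ_{k∈K} t_k − R. -/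
set_option linter.unusedSectionVars false
set_option maxHeartbeats 1000000

open Finset Submodule Module Matrix

section Foundations

variable {F S T : Type*} [Field F] [Fintype S] [Fintype T] [DecidableEq S] [DecidableEq T]

noncomputable def prj (F : Type*) [Field F] {T : Type*} (V : Finset T) :
    (T → F) →ₗ[F] (V → F) := LinearMap.funLeft F F Subtype.val

noncomputable def RS (G : Matrix S T F) (U : Finset S) : Submodule F (T → F) :=
  Submodule.span F ((fun i (j : T) => G i j) '' (U : Set S))

lemma rk_eq (G : Matrix S T F) (U : Finset S) (V : Finset T) :
    rk G U V = finrank F ((RS G U).map (prj F V)) := by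
  rw [rk, Matrix.rank_eq_finrank_span_row, RS, ← Submodule.span_image]
  have hset : Set.range (G.submatrix (fun i : U => (i : S)) (fun j : V => (j : T)))
      = ⇑(prj F V) '' ((fun i (j : T) => G i j) '' (U : Set S)) := by
    ext g
    constructor
    · rintro ⟨i, rfl⟩
      exact ⟨fun j => G i j, ⟨i, i.2, rfl⟩, rfl⟩
    · rintro ⟨h, ⟨i, hi, rfl⟩, rfl⟩
      exact ⟨⟨i, hi⟩, rfl⟩
  exact congrArg (fun X => finrank F (span F X)) hset

/-- rank-nullity for the image of a submodule -/
lemma finrank_map_add_inf_ker {M N : Type*} [AddCommGroup M] [Module F M]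
    [AddCommGroup N] [Module F N] [FiniteDimensional F M]
    (p : Submodule F M) (f : M →ₗ[F] N) :
    finrank F (p.map f) + finrank F (p ⊓ LinearMap.ker f : Submodule F M) = finrank F p := by
  have h := LinearMap.finrank_range_add_finrank_ker (f.comp p.subtype)
  rw [LinearMap.range_comp, Submodule.range_subtype, LinearMap.ker_comp] at h
  rw [← h]
  congr 1
  have hmap := Submodule.map_comap_subtype p (LinearMap.ker f)
  have := (Submodule.equivMapOfInjective p.subtype (Submodule.injective_subtype p)
      (Submodule.comap p.subtype (LinearMap.ker f))).finrank_eq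
  rw [this, hmap, inf_comm]

lemma mem_ker_prj {V : Finset T} {g : T → F} :
    g ∈ LinearMap.ker (prj F V) ↔ ∀ j ∈ V, g j = 0 := by
  simp only [prj, LinearMap.mem_ker, LinearMap.funLeft_apply]
  constructor
  · intro h j hj
    exact congrFun h ⟨j, hj⟩
  · intro h
    funext j
    exact h j j.2

lemma ker_prj_anti {V V' : Finset T} (h : V' ⊆ V) :
    LinearMap.ker (prj F V) ≤ LinearMap.ker (prj F V') := by
  intro g hg
  rw [mem_ker_prj] at hg ⊢
  exact fun j hj => hg j (h hj)

lemma ker_prj_sup (V V' : Finset T) :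
    LinearMap.ker (prj F V) ⊔ LinearMap.ker (prj F V') = LinearMap.ker (prj F (V ∩ V')) := by
  apply le_antisymm
  · exact sup_le (ker_prj_anti (inter_subset_left)) (ker_prj_anti (inter_subset_right))
  · intro g hg
    rw [mem_ker_prj] at hg
    have : g = (fun j => if j ∈ V then 0 else g j) + (fun j => if j ∈ V then g j else 0) := by
      funext j; by_cases hj : j ∈ V <;> simp [hj]
    rw [this]
    apply Submodule.add_mem_sup (mem_ker_prj.2 ?_) (mem_ker_prj.2 ?_)
    · intro j hj; simp [hj]
    · intro j hj
      by_cases hjV : j ∈ V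
      · simp [hjV, hg j (mem_inter.2 ⟨hjV, hj⟩)]
      · simp [hjV]

lemma ker_prj_inf (V V' : Finset T) :
    LinearMap.ker (prj F V) ⊓ LinearMap.ker (prj F V') = LinearMap.ker (prj F (V ∪ V')) := by
  apply le_antisymm
  · intro g hg
    have h1 := mem_ker_prj.1 hg.1
    have h2 := mem_ker_prj.1 hg.2
    rw [mem_ker_prj]
    intro j hj
    rcases mem_union.1 hj with h | h
    · exact h1 j h
    · exact h2 j h
  · exact le_inf (ker_prj_anti subset_union_left) (ker_prj_anti subset_union_right)

lemma RS_union (G : Matrix S T F) (U U' : Finset S) :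
    RS G (U ∪ U') = RS G U ⊔ RS G U' := by
  rw [RS, RS, RS, ← Submodule.span_union, ← Set.image_union]
  congr 1
  ext
  simp

lemma RS_mono (G : Matrix S T F) {U U' : Finset S} (h : U ⊆ U') : RS G U ≤ RS G U' :=
  Submodule.span_mono (Set.image_mono (by exact_mod_cast h))

end Foundations

section Core
variable {F S T : Type*} [Field F] [Fintype S] [Fintype T] [DecidableEq S] [DecidableEq T]

lemma rk_submodular (G : Matrix S T F) (U U' : Finset S) (V V' : Finset T) :
    rk G (U ∪ U') (V ∩ V') + rk G (U ∩ U') (V ∪ V') ≤ rk G U V + rk G U' V' := by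
  classical
  set X := RS G U with hX
  set X' := RS G U' with hX'
  set Z := LinearMap.ker (prj F V) with hZ
  set Z' := LinearMap.ker (prj F V') with hZ'
  have e1 : finrank F ((X ⊔ X').map (prj F (V ∩ V'))) +
      finrank F ((X ⊔ X') ⊓ (Z ⊔ Z') : Submodule F (T → F)) =
      finrank F (X ⊔ X' : Submodule F (T → F)) := by
    have h := finrank_map_add_inf_ker (X ⊔ X') (prj F (V ∩ V'))
    rwa [← ker_prj_sup, ← hZ, ← hZ'] at h
  have e2 : finrank F ((X ⊓ X').map (prj F (V ∪ V'))) +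
      finrank F ((X ⊓ X') ⊓ (Z ⊓ Z') : Submodule F (T → F)) =
      finrank F (X ⊓ X' : Submodule F (T → F)) := by
    have h := finrank_map_add_inf_ker (X ⊓ X') (prj F (V ∪ V'))
    rwa [← ker_prj_inf, ← hZ, ← hZ'] at h
  have e3 := finrank_map_add_inf_ker X (prj F V)
  have e4 := finrank_map_add_inf_ker X' (prj F V')
  rw [← hZ] at e3
  rw [← hZ'] at e4
  have e5 := Submodule.finrank_sup_add_finrank_inf_eq X X'
  have e6 := Submodule.finrank_sup_add_finrank_inf_eq (X ⊓ Z) (X' ⊓ Z')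
  have i1 : finrank F ((X ⊓ Z) ⊔ (X' ⊓ Z') : Submodule F (T → F)) ≤
      finrank F ((X ⊔ X') ⊓ (Z ⊔ Z') : Submodule F (T → F)) :=
    Submodule.finrank_mono (sup_le (inf_le_inf le_sup_left le_sup_left)
      (inf_le_inf le_sup_right le_sup_right))
  have i2 : finrank F ((X ⊓ Z) ⊓ (X' ⊓ Z') : Submodule F (T → F)) ≤
      finrank F ((X ⊓ X') ⊓ (Z ⊓ Z') : Submodule F (T → F)) :=
    Submodule.finrank_mono (le_inf (inf_le_inf inf_le_left inf_le_left)
      (inf_le_inf inf_le_right inf_le_right))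
  have i3 : finrank F ((RS G (U ∩ U')).map (prj F (V ∪ V'))) ≤
      finrank F ((X ⊓ X').map (prj F (V ∪ V'))) :=
    Submodule.finrank_mono (Submodule.map_mono
      (le_inf (RS_mono G inter_subset_left) (RS_mono G inter_subset_right)))
  rw [rk_eq, rk_eq, rk_eq, rk_eq, RS_union, ← hX, ← hX']
  omega

end Core

section Derived
variable {F S T : Type*} [Field F] [Fintype S] [Fintype T] [DecidableEq S] [DecidableEq T]

lemma rk_le_card_left (G : Matrix S T F) (U : Finset S) (V : Finset T) :
    rk G U V ≤ U.card := by
  rw [rk]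
  exact (Matrix.rank_le_card_height _).trans (le_of_eq (Fintype.card_coe U))

lemma rk_le_card_right (G : Matrix S T F) (U : Finset S) (V : Finset T) :
    rk G U V ≤ V.card := by
  rw [rk]
  exact (Matrix.rank_le_card_width _).trans (le_of_eq (Fintype.card_coe V))

lemma rk_mono_left (G : Matrix S T F) {U U' : Finset S} (V : Finset T) (h : U ⊆ U') :
    rk G U V ≤ rk G U' V := by
  rw [rk_eq, rk_eq]
  exact Submodule.finrank_mono (Submodule.map_mono (RS_mono G h))

lemma rk_mono_right (G : Matrix S T F) (U : Finset S) {V V' : Finset T} (h : V ⊆ V') :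
    rk G U V ≤ rk G U V' := by
  rw [rk_eq, rk_eq]
  have hcomp : prj F V =
      (LinearMap.funLeft F F (fun j : V => (⟨(j : T), h j.2⟩ : V'))).comp (prj F V') := by
    rw [prj, prj, ← LinearMap.funLeft_comp]
    rfl
  rw [hcomp]
  have : (RS G U).map ((LinearMap.funLeft F F (fun j : V => (⟨(j : T), h j.2⟩ : V'))).comp
      (prj F V')) = ((RS G U).map (prj F V')).map (LinearMap.funLeft F F (fun j : V => (⟨(j : T), h j.2⟩ : V'))) := by
    rw [Submodule.map_comp]
  rw [this]
  exact Submodule.finrank_map_le _ _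

lemma rk_union_le_card_add (G : Matrix S T F) (U W : Finset S) (V : Finset T) :
    rk G (U ∪ W) V ≤ rk G U V + W.card := by
  have h := rk_submodular G U W V V
  have h2 := rk_le_card_left G W V
  rw [inter_self] at h
  omega

lemma rk_transpose (G : Matrix S T F) (U : Finset S) (V : Finset T) :
    rk Gᵀ V U = rk G U V := by
  rw [rk, rk, ← Matrix.transpose_submatrix, Matrix.rank_transpose]

/-- transfer lemma -/
lemma rk_transfer (G : Matrix S T F) {U U' : Finset S} {V V' : Finset T} {x : S}
    (hUU : U ⊆ U') (hVV : V' ⊆ V) (hx : x ∉ U') :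
    rk G (insert x U') V' + rk G U V ≤ rk G (insert x U) V + rk G U' V' := by
  have h := rk_submodular G (insert x U) U' V V'
  have h1 : insert x U ∪ U' = insert x U' := by
    ext y; simp only [mem_union, mem_insert]
    constructor
    · rintro ((rfl | hy) | hy)
      · exact Or.inl rfl
      · exact Or.inr (hUU hy)
      · exact Or.inr hy
    · rintro (rfl | hy)
      · exact Or.inl (Or.inl rfl)
      · exact Or.inr hy
  have h2 : insert x U ∩ U' = U := by
    ext y; simp only [mem_inter, mem_insert]
    constructor
    · rintro ⟨rfl | hy, hy'⟩
      · exact absurd hy' hx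
      · exact hy
    · intro hy
      exact ⟨Or.inr hy, hUU hy⟩
  have h3 : V ∩ V' = V' := inter_eq_right.2 hVV
  have h4 : V ∪ V' = V := union_eq_left.2 hVV
  rw [h1, h2, h3, h4] at h
  omega

lemma rk_exists_insert (G : Matrix S T F) {U W : Finset S} (V : Finset T)
    (hdisj : Disjoint W U) (h : rk G U V < rk G (U ∪ W) V) :
    ∃ x ∈ W, rk G U V < rk G (insert x U) V := by
  classical
  induction W using Finset.induction generalizing U with
  | empty => simp at h
  | @insert w W' hw ih =>
    by_cases hcase : rk G U V < rk G (insert w U) V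
    · exact ⟨w, mem_insert_self _ _, hcase⟩
    · have heq : rk G (insert w U) V = rk G U V :=
        le_antisymm (not_lt.1 hcase) (rk_mono_left G V (subset_insert _ _))
      have hset : U ∪ insert w W' = (insert w U) ∪ W' := by
        ext y; simp only [mem_union, mem_insert]; tauto
      have hdisj2 : Disjoint W' (insert w U) := by
        rw [disjoint_insert_right]
        exact ⟨hw, (disjoint_insert_left.1 hdisj).2⟩
      have h' : rk G (insert w U) V < rk G ((insert w U) ∪ W') V := by
        rw [heq, ← hset]
        exact h
      obtain ⟨x, hxW, hx2⟩ := ih hdisj2 h'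
      refine ⟨x, mem_insert_of_mem hxW, ?_⟩
      by_contra hcon
      have hxeq : rk G (insert x U) V = rk G U V :=
        le_antisymm (not_lt.1 hcon) (rk_mono_left G V (subset_insert _ _))
      have hxnot : x ∉ insert w U := by
        simp only [mem_insert]
        rintro (rfl | hxU)
        · exact hw hxW
        · exact (Finset.disjoint_left.1 (disjoint_insert_left.1 hdisj).2) hxW hxU
      have htr := rk_transfer G (subset_insert w U) (le_refl V) hxnot
      omega

end Derived

section Nonsingular

/-- The submatrix of `G` on rows `U` and columns `V` is square and nonsingular. -/
def IsNonsingularSub {F S T : Type*} [Field F] [Fintype S] [Fintype T] [DecidableEq S]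
    (G : Matrix S T F) (U : Finset S) (V : Finset T) : Prop :=
  ∃ e : (U : Finset S) ≃ (V : Finset T),
    ((G.submatrix (fun i : U => (i : S)) (fun j : V => (j : T))).submatrix id e).det ≠ 0

variable {F S T : Type*} [Field F] [Fintype S] [Fintype T] [DecidableEq S] [DecidableEq T]

lemma rank_submatrix_id_equiv {k l o : Type*} [Fintype k] [Fintype l] [Fintype o]
    (M : Matrix k l F) (e : o ≃ l) : (M.submatrix id e).rank = M.rank := by
  classical
  rw [Matrix.rank, Matrix.rank, Matrix.mulVecLin_submatrix]
  have hid : LinearMap.funLeft F F (id : k → k) = LinearMap.id := by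
    ext g x; rfl
  rw [hid]
  rw [LinearMap.id_comp, LinearMap.range_comp]
  have hsurj : LinearMap.range (LinearMap.funLeft F F (e.symm : l → o)) = ⊤ :=
    LinearMap.range_eq_top.2
      (LinearMap.funLeft_surjective_of_injective F F _ e.symm.injective)
  rw [hsurj, Submodule.map_top]

lemma isNonsingularSub_iff (G : Matrix S T F) (U : Finset S) (V : Finset T) :
    IsNonsingularSub G U V ↔ U.card = V.card ∧ rk G U V = U.card := by
  constructor
  · rintro ⟨e, he⟩
    have hcard : U.card = V.card := by
      rw [← Fintype.card_coe, ← Fintype.card_coe]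
      exact Fintype.card_congr e
    refine ⟨hcard, ?_⟩
    have hunit : IsUnit ((G.submatrix (fun i : U => (i : S)) (fun j : V => (j : T))).submatrix
        id e) := by
      rw [Matrix.isUnit_iff_isUnit_det]
      exact Ne.isUnit he
    have := Matrix.rank_of_isUnit _ hunit
    rw [rank_submatrix_id_equiv] at this
    rw [rk, this, Fintype.card_coe]
  · rintro ⟨hcard, hrank⟩
    have hc : Fintype.card (U : Finset S) = Fintype.card (V : Finset T) := by
      rw [Fintype.card_coe, Fintype.card_coe, hcard]
    refine ⟨Fintype.equivOfCardEq hc, ?_⟩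
    set M := (G.submatrix (fun i : U => (i : S)) (fun j : V => (j : T))).submatrix id
      (Fintype.equivOfCardEq hc) with hM
    have hrk : M.rank = Fintype.card (U : Finset S) := by
      rw [hM, rank_submatrix_id_equiv, ← rk, hrank, Fintype.card_coe]
    have hsurj : Function.Surjective M.mulVec := by
      have htop : LinearMap.range M.mulVecLin = ⊤ := by
        apply Submodule.eq_top_of_finrank_eq
        rw [← Matrix.rank, hrk, Module.finrank_pi]
      intro y
      obtain ⟨v, hv⟩ := LinearMap.range_eq_top.1 htop y
      exact ⟨v, hv⟩
    have : IsUnit M := Matrix.mulVec_surjective_iff_isUnit.1 hsurj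
    rw [Matrix.isUnit_iff_isUnit_det] at this
    exact this.ne_zero

lemma isNonsingularSub_transpose {G : Matrix S T F} {U : Finset S} {V : Finset T}
    (h : IsNonsingularSub Gᵀ V U) : IsNonsingularSub G U V := by
  rw [isNonsingularSub_iff] at h ⊢
  rw [rk_transpose] at h
  exact ⟨h.1.symm, by rw [h.2, h.1]⟩

end Nonsingular

section Step
variable {F S T : Type*} [Field F] [Fintype S] [Fintype T] [DecidableEq S] [DecidableEq T]

/-- The rank condition for a system with mandatory rows `A₀` and columns `B₀`. -/
def Cond (G : Matrix S T F) {m n : ℕ} (Sp : Fin m → Finset S) (Tp : Fin n → Finset T)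
    (s : Fin m → ℕ) (t : Fin n → ℕ) (A₀ : Finset S) (B₀ : Finset T) (R : ℕ) : Prop :=
  ∀ (I : Finset (Fin m)) (K : Finset (Fin n)),
    ((∑ i ∈ I, (s i : ℤ)) + A₀.card) + ((∑ k ∈ K, (t k : ℤ)) + B₀.card) - R ≤
      (rk G (I.biUnion Sp ∪ A₀) (K.biUnion Tp ∪ B₀) : ℤ)

lemma cond_transpose {G : Matrix S T F} {m n : ℕ} {Sp : Fin m → Finset S}
    {Tp : Fin n → Finset T} {s : Fin m → ℕ} {t : Fin n → ℕ} {A₀ : Finset S} {B₀ : Finset T}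
    {R : ℕ} (h : Cond G Sp Tp s t A₀ B₀ R) : Cond Gᵀ Tp Sp t s B₀ A₀ R := by
  intro K I
  rw [rk_transpose]
  have := h I K
  linarith

lemma row_union_row {m : ℕ} (Sp : Fin m → Finset S) (A₀ : Finset S) (I I' : Finset (Fin m)) :
    (I.biUnion Sp ∪ A₀) ∪ (I'.biUnion Sp ∪ A₀) = (I ∪ I').biUnion Sp ∪ A₀ := by
  ext y
  simp only [mem_union, mem_biUnion]
  constructor
  · rintro ((⟨i, hi, hy⟩ | h) | (⟨i, hi, hy⟩ | h))
    · exact Or.inl ⟨i, Or.inl hi, hy⟩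
    · exact Or.inr h
    · exact Or.inl ⟨i, Or.inr hi, hy⟩
    · exact Or.inr h
  · rintro (⟨i, hi, hy⟩ | h)
    · rcases hi with h' | h'
      · exact Or.inl (Or.inl ⟨i, h', hy⟩)
      · exact Or.inr (Or.inl ⟨i, h', hy⟩)
    · exact Or.inl (Or.inr h)

lemma row_inter_row {m : ℕ} {Sp : Fin m → Finset S} {A₀ : Finset S}
    (hSd : ∀ i j, i ≠ j → Disjoint (Sp i) (Sp j)) (hA₀ : ∀ i, Disjoint A₀ (Sp i))
    (I I' : Finset (Fin m)) :
    (I.biUnion Sp ∪ A₀) ∩ (I'.biUnion Sp ∪ A₀) = (I ∩ I').biUnion Sp ∪ A₀ := by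
  ext y
  simp only [mem_inter, mem_union, mem_biUnion]
  constructor
  · rintro ⟨⟨i, hi, hy⟩ | h, ⟨i', hi', hy'⟩ | h'⟩
    · have : i = i' := by
        by_contra hne
        exact (Finset.disjoint_left.1 (hSd i i' hne)) hy hy'
      subst this
      exact Or.inl ⟨i, ⟨hi, hi'⟩, hy⟩
    · exact absurd hy (Finset.disjoint_left.1 (hA₀ i) h')
    · exact absurd hy' (Finset.disjoint_left.1 (hA₀ i') h)
    · exact Or.inr h
  · rintro (⟨i, ⟨h1, h2⟩, hy⟩ | h)
    · exact ⟨Or.inl ⟨i, h1, hy⟩, Or.inl ⟨i, h2, hy⟩⟩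
    · exact ⟨Or.inr h, Or.inr h⟩

end Step

section StepRow
variable {F S T : Type*} [Field F] [Fintype S] [Fintype T] [DecidableEq S] [DecidableEq T]

lemma step_row (G : Matrix S T F) {m n : ℕ} {Sp : Fin m → Finset S} {Tp : Fin n → Finset T}
    {s : Fin m → ℕ} {t : Fin n → ℕ} {A₀ : Finset S} {B₀ : Finset T} {R : ℕ}
    (hSd : ∀ i j, i ≠ j → Disjoint (Sp i) (Sp j)) (hA₀ : ∀ i, Disjoint A₀ (Sp i))
    (hTd : ∀ i j, i ≠ j → Disjoint (Tp i) (Tp j)) (hB₀ : ∀ j, Disjoint B₀ (Tp j))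
    (ht : (∑ j, t j) + B₀.card = R)
    (hcond : Cond G Sp Tp s t A₀ B₀ R) (i₀ : Fin m) (hi₀ : s i₀ ≠ 0) :
    ∃ x ∈ Sp i₀, Cond G (Function.update Sp i₀ ((Sp i₀).erase x)) Tp
      (Function.update s i₀ (s i₀ - 1)) t (insert x A₀) B₀ R := by
  classical
  set Row : Finset (Fin m) → Finset S := fun I => I.biUnion Sp ∪ A₀ with hRow
  set Col : Finset (Fin n) → Finset T := fun K => K.biUnion Tp ∪ B₀ with hCol
  set f : Finset (Fin m) × Finset (Fin n) → ℤ :=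
    fun p => (rk G (Row p.1) (Col p.2) : ℤ) - (∑ i ∈ p.1, (s i : ℤ)) - (∑ k ∈ p.2, (t k : ℤ))
      - A₀.card - B₀.card + R with hf
  have hf0 : ∀ p, 0 ≤ f p := by
    intro p
    have := hcond p.1 p.2
    simp only [hf]
    linarith
  have hsub : ∀ p q : Finset (Fin m) × Finset (Fin n),
      f (p.1 ∪ q.1, p.2 ∩ q.2) + f (p.1 ∩ q.1, p.2 ∪ q.2) ≤ f p + f q := by
    intro p q
    have h := rk_submodular G (Row p.1) (Row q.1) (Col p.2) (Col q.2)
    rw [row_union_row, row_inter_row hSd hA₀, row_union_row, row_inter_row] at h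
    · have h' : ((rk G (Row (p.1 ∪ q.1)) (Col (p.2 ∩ q.2)) : ℤ) +
          (rk G (Row (p.1 ∩ q.1)) (Col (p.2 ∪ q.2)) : ℤ)) ≤
          (rk G (Row p.1) (Col p.2) : ℤ) + (rk G (Row q.1) (Col q.2) : ℤ) := by
        exact_mod_cast h
      have hmσ : (∑ i ∈ p.1 ∪ q.1, (s i : ℤ)) + (∑ i ∈ p.1 ∩ q.1, (s i : ℤ)) =
          (∑ i ∈ p.1, (s i : ℤ)) + (∑ i ∈ q.1, (s i : ℤ)) := Finset.sum_union_inter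
      have hmτ : (∑ k ∈ p.2 ∩ q.2, (t k : ℤ)) + (∑ k ∈ p.2 ∪ q.2, (t k : ℤ)) =
          (∑ k ∈ p.2, (t k : ℤ)) + (∑ k ∈ q.2, (t k : ℤ)) := by
        rw [add_comm]; exact Finset.sum_union_inter
      simp only [hf]
      linarith
    · exact hTd
    · exact hB₀
  -- the nonempty tight family
  have hP0 : f (∅, Finset.univ) = 0 := by
    have h1 : (rk G (Row ∅) (Col Finset.univ) : ℤ) ≤ A₀.card := by
      have hRA : Row ∅ = A₀ := by simp [hRow]
      rw [hRA]
      exact_mod_cast rk_le_card_left G A₀ (Col Finset.univ)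
    have h2 := hf0 (∅, Finset.univ)
    have h3 : (∑ k : Fin n, (t k : ℤ)) + (B₀.card : ℤ) = R := by exact_mod_cast ht
    simp only [hf] at h2 ⊢
    simp only [Finset.sum_empty] at h2 ⊢
    linarith
  set P : Finset (Finset (Fin m) × Finset (Fin n)) :=
    Finset.univ.filter (fun p => f p = 0 ∧ i₀ ∉ p.1) with hP
  have hPmem : ∀ p, p ∈ P ↔ f p = 0 ∧ i₀ ∉ p.1 := by
    intro p; simp [hP]
  have hPne : P.Nonempty := ⟨(∅, Finset.univ), (hPmem _).2 ⟨hP0, notMem_empty _⟩⟩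
  obtain ⟨p₁, hp₁P, hp₁max⟩ := Finset.exists_max_image P (fun p => p.1.card + p.2ᶜ.card) hPne
  obtain ⟨hp₁f, hp₁i⟩ := (hPmem p₁).1 hp₁P
  -- every tight pair avoiding i₀ is below p₁
  have hPsub : ∀ p ∈ P, p.1 ⊆ p₁.1 ∧ p₁.2 ⊆ p.2 := by
    intro p hp
    obtain ⟨hpf, hpi⟩ := (hPmem p).1 hp
    have hj0 : f (p.1 ∪ p₁.1, p.2 ∩ p₁.2) = 0 := by
      have h1 := hsub p p₁
      have h2 := hf0 (p.1 ∪ p₁.1, p.2 ∩ p₁.2)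
      have h3 := hf0 (p.1 ∩ p₁.1, p.2 ∪ p₁.2)
      linarith
    have hjP : (p.1 ∪ p₁.1, p.2 ∩ p₁.2) ∈ P := by
      refine (hPmem _).2 ⟨hj0, ?_⟩
      simp only [mem_union]
      rintro (h | h)
      · exact hpi h
      · exact hp₁i h
    have hmax := hp₁max _ hjP
    dsimp only at hmax
    have c1 : p₁.1.card ≤ (p.1 ∪ p₁.1).card := card_le_card subset_union_right
    have c2 : p₁.2ᶜ.card ≤ (p.2 ∩ p₁.2)ᶜ.card :=
      card_le_card (compl_subset_compl.2 inter_subset_right)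
    have e1 : p₁.1 = p.1 ∪ p₁.1 :=
      Finset.eq_of_subset_of_card_le subset_union_right (by omega)
    have e2 : p₁.2ᶜ = (p.2 ∩ p₁.2)ᶜ :=
      Finset.eq_of_subset_of_card_le (compl_subset_compl.2 inter_subset_right) (by omega)
    constructor
    · intro i hi
      rw [e1]
      exact mem_union_left _ hi
    · have : p.2 ∩ p₁.2 = p₁.2 := compl_inj_iff.1 e2.symm
      rw [← this]
      exact inter_subset_left
  -- find the pivot row x
  have hdisj : Disjoint (Sp i₀) (Row p₁.1) := by
    simp only [hRow]
    rw [Finset.disjoint_union_right]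
    constructor
    · rw [Finset.disjoint_biUnion_right]
      intro i hi
      exact hSd i₀ i (fun h => hp₁i (h ▸ hi))
    · exact (hA₀ i₀).symm
  have hrkgt : rk G (Row p₁.1) (Col p₁.2) < rk G (Row p₁.1 ∪ Sp i₀) (Col p₁.2) := by
    have h1 := hf0 (insert i₀ p₁.1, p₁.2)
    have hRins : Row (insert i₀ p₁.1) = Row p₁.1 ∪ Sp i₀ := by
      simp only [hRow, Finset.biUnion_insert]
      ext y
      simp only [mem_union]
      tauto
    have hσins : (∑ i ∈ insert i₀ p₁.1, (s i : ℤ)) = (s i₀ : ℤ) + ∑ i ∈ p₁.1, (s i : ℤ) :=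
      Finset.sum_insert hp₁i
    simp only [hf, hRins, hσins] at h1
    simp only [hf] at hp₁f
    have hs1 : (1 : ℤ) ≤ s i₀ := by exact_mod_cast Nat.one_le_iff_ne_zero.2 hi₀
    have : (rk G (Row p₁.1) (Col p₁.2) : ℤ) < (rk G (Row p₁.1 ∪ Sp i₀) (Col p₁.2) : ℤ) := by
      linarith
    exact_mod_cast this
  obtain ⟨x, hxSp, hx⟩ := rk_exists_insert G (Col p₁.2) hdisj hrkgt
  refine ⟨x, hxSp, ?_⟩
  have hxA₀ : x ∉ A₀ := Finset.disjoint_right.1 (hA₀ i₀) hxSp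
  have hcardins : ((insert x A₀).card : ℤ) = (A₀.card : ℤ) + 1 := by
    rw [Finset.card_insert_of_notMem hxA₀]
    push_cast
    ring
  intro I K
  by_cases hiI : i₀ ∈ I
  · -- the pivot row is absorbed
    have hrows : I.biUnion (Function.update Sp i₀ ((Sp i₀).erase x)) ∪ insert x A₀
        = Row I := by
      simp only [hRow]
      ext y
      simp only [mem_union, mem_biUnion, mem_insert]
      constructor
      · rintro (⟨i, hi, hy⟩ | (rfl | h))
        · by_cases hii : i = i₀
          · rw [hii, Function.update_self] at hy
            exact Or.inl ⟨i₀, hiI, mem_of_mem_erase hy⟩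
          · rw [Function.update_of_ne hii] at hy
            exact Or.inl ⟨i, hi, hy⟩
        · exact Or.inl ⟨i₀, hiI, hxSp⟩
        · exact Or.inr h
      · rintro (⟨i, hi, hy⟩ | h)
        · by_cases hii : i = i₀
          · rw [hii] at hy
            by_cases hyx : y = x
            · exact Or.inr (Or.inl hyx)
            · exact Or.inl ⟨i₀, hiI, by rw [Function.update_self]; exact mem_erase.2 ⟨hyx, hy⟩⟩
          · exact Or.inl ⟨i, hi, by rw [Function.update_of_ne hii]; exact hy⟩
        · exact Or.inr (Or.inr h)
    have hsum : (∑ i ∈ I, ((Function.update s i₀ (s i₀ - 1)) i : ℤ))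
        = (∑ i ∈ I, (s i : ℤ)) - 1 := by
      have hcast : ∀ i, (((Function.update s i₀ (s i₀ - 1)) i : ℕ) : ℤ)
          = Function.update (fun i => (s i : ℤ)) i₀ ((s i₀ : ℤ) - 1) i := by
        intro i
        by_cases hii : i = i₀
        · subst hii
          rw [Function.update_self, Function.update_self]
          have : 1 ≤ s i := Nat.one_le_iff_ne_zero.2 hi₀
          push_cast [Nat.cast_sub this]
          ring
        · rw [Function.update_of_ne hii, Function.update_of_ne hii]
      rw [Finset.sum_congr rfl (fun i _ => hcast i), Finset.sum_update_of_mem hiI]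
      have := Finset.sum_erase_add I (fun i => (s i : ℤ)) hiI
      simp only [Finset.sdiff_singleton_eq_erase]
      linarith
    rw [hrows, hsum, hcardins]
    have := hcond I K
    simp only [hRow, hCol] at this ⊢
    linarith
  · -- i₀ ∉ I : the new row x must be accounted for
    have hrows : I.biUnion (Function.update Sp i₀ ((Sp i₀).erase x)) ∪ insert x A₀
        = insert x (Row I) := by
      simp only [hRow]
      ext y
      simp only [mem_union, mem_biUnion, mem_insert]
      constructor
      · rintro (⟨i, hi, hy⟩ | (rfl | h))
        · have hii : i ≠ i₀ := by rintro rfl; exact hiI hi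
          rw [Function.update_of_ne hii] at hy
          exact Or.inr (Or.inl ⟨i, hi, hy⟩)
        · exact Or.inl rfl
        · exact Or.inr (Or.inr h)
      · rintro (rfl | (⟨i, hi, hy⟩ | h))
        · exact Or.inr (Or.inl rfl)
        · have hii : i ≠ i₀ := by rintro rfl; exact hiI hi
          exact Or.inl ⟨i, hi, by rw [Function.update_of_ne hii]; exact hy⟩
        · exact Or.inr (Or.inr h)
    have hsum : (∑ i ∈ I, ((Function.update s i₀ (s i₀ - 1)) i : ℤ))
        = ∑ i ∈ I, (s i : ℤ) := by
      apply Finset.sum_congr rfl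
      intro i hi
      have hii : i ≠ i₀ := by rintro rfl; exact hiI hi
      rw [Function.update_of_ne hii]
    rw [hrows, hsum, hcardins]
    by_cases hft : f (I, K) = 0
    · have hmem : (I, K) ∈ P := (hPmem _).2 ⟨hft, hiI⟩
      obtain ⟨hIsub, hKsub⟩ := hPsub _ hmem
      have hxR : x ∉ Row p₁.1 := Finset.disjoint_left.1 hdisj hxSp
      have hRmono : Row I ⊆ Row p₁.1 := by
        simp only [hRow]
        exact union_subset_union_left (biUnion_subset_biUnion_of_subset_left _ hIsub)
      have hCmono : Col p₁.2 ⊆ Col K := by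
        simp only [hCol]
        exact union_subset_union_left (biUnion_subset_biUnion_of_subset_left _ hKsub)
      have htr := rk_transfer G hRmono hCmono hxR
      have h9 : rk G (Row I) (Col K) + 1 ≤ rk G (insert x (Row I)) (Col K) := by omega
      have h9' : (rk G (Row I) (Col K) : ℤ) + 1 ≤ (rk G (insert x (Row I)) (Col K) : ℤ) := by
        exact_mod_cast h9
      simp only [hf] at hft
      simp only [hCol] at h9' hft ⊢
      linarith
    · have hge1 : 1 ≤ f (I, K) := by
        have := hf0 (I, K)
        omega
      have hmono := rk_mono_left G (Col K) (subset_insert x (Row I))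
      have hmono' : (rk G (Row I) (Col K) : ℤ) ≤ (rk G (insert x (Row I)) (Col K) : ℤ) := by
        exact_mod_cast hmono
      simp only [hf] at hge1
      simp only [hCol] at hge1 hmono' ⊢
      linarith

end StepRow

section StepColTerm
variable {F S T : Type*} [Field F] [Fintype S] [Fintype T] [DecidableEq S] [DecidableEq T]

lemma step_col (G : Matrix S T F) {m n : ℕ} {Sp : Fin m → Finset S} {Tp : Fin n → Finset T}
    {s : Fin m → ℕ} {t : Fin n → ℕ} {A₀ : Finset S} {B₀ : Finset T} {R : ℕ}
    (hSd : ∀ i j, i ≠ j → Disjoint (Sp i) (Sp j)) (hA₀ : ∀ i, Disjoint A₀ (Sp i))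
    (hTd : ∀ i j, i ≠ j → Disjoint (Tp i) (Tp j)) (hB₀ : ∀ j, Disjoint B₀ (Tp j))
    (hs : (∑ i, s i) + A₀.card = R)
    (hcond : Cond G Sp Tp s t A₀ B₀ R) (j₀ : Fin n) (hj₀ : t j₀ ≠ 0) :
    ∃ y ∈ Tp j₀, Cond G Sp (Function.update Tp j₀ ((Tp j₀).erase y))
      s (Function.update t j₀ (t j₀ - 1)) A₀ (insert y B₀) R := by
  obtain ⟨y, hy, hc⟩ := step_row Gᵀ hTd hB₀ hSd hA₀ hs (cond_transpose hcond) j₀ hj₀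
  refine ⟨y, hy, ?_⟩
  have := cond_transpose hc
  rwa [Matrix.transpose_transpose] at this

lemma terminal_case (G : Matrix S T F) {m n : ℕ} {Sp : Fin m → Finset S} {Tp : Fin n → Finset T}
    {s : Fin m → ℕ} {t : Fin n → ℕ} {A₀ : Finset S} {B₀ : Finset T} {R : ℕ}
    (hSd : ∀ i j, i ≠ j → Disjoint (Sp i) (Sp j)) (hA₀ : ∀ i, Disjoint A₀ (Sp i))
    (hTd : ∀ i j, i ≠ j → Disjoint (Tp i) (Tp j)) (hB₀ : ∀ j, Disjoint B₀ (Tp j))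
    (hs : (∑ i, s i) + A₀.card = R) (ht : (∑ j, t j) + B₀.card = R)
    (hcond : Cond G Sp Tp s t A₀ B₀ R)
    (hterm_s : ∀ i, ¬((Sp i).card ≤ s i) → s i = 0)
    (hterm_t : ∀ j, ¬((Tp j).card ≤ t j) → t j = 0) :
    ∃ (a : Fin m → Finset S) (b : Fin n → Finset T),
      (∀ i, a i ⊆ Sp i) ∧ (∀ i, (a i).card = s i) ∧
      (∀ j, b j ⊆ Tp j) ∧ (∀ j, (b j).card = t j) ∧
      IsNonsingularSub G (Finset.univ.biUnion a ∪ A₀) (Finset.univ.biUnion b ∪ B₀) := by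
  classical
  -- each quota is at most the class size
  have hsle : ∀ i, s i ≤ (Sp i).card := by
    intro i
    have h := hcond {i} Finset.univ
    rw [Finset.singleton_biUnion] at h
    rw [Finset.sum_singleton] at h
    have h2 : (rk G (Sp i ∪ A₀) (Finset.univ.biUnion Tp ∪ B₀) : ℤ) ≤ (Sp i).card + A₀.card := by
      have := rk_le_card_left G (Sp i ∪ A₀) (Finset.univ.biUnion Tp ∪ B₀)
      have := Finset.card_union_le (Sp i) A₀
      push_cast
      exact_mod_cast le_trans (Nat.cast_le.2 ‹rk G (Sp i ∪ A₀) _ ≤ (Sp i ∪ A₀).card›) (by exact_mod_cast ‹(Sp i ∪ A₀).card ≤ (Sp i).card + A₀.card›)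
    have h3 : ((∑ k : Fin n, (t k : ℤ)) + (B₀.card : ℤ)) = R := by exact_mod_cast ht
    have h4 : ((s i : ℤ)) ≤ (Sp i).card := by linarith
    exact_mod_cast h4
  have hcard : ∀ i, s i = 0 ∨ s i = (Sp i).card := by
    intro i
    by_cases h : (Sp i).card ≤ s i
    · exact Or.inr (le_antisymm (hsle i) h)
    · exact Or.inl (hterm_s i h)
  have htle : ∀ j, t j ≤ (Tp j).card := by
    intro j
    have h := hcond Finset.univ {j}
    rw [Finset.singleton_biUnion] at h
    rw [Finset.sum_singleton] at h
    have h2 : (rk G (Finset.univ.biUnion Sp ∪ A₀) (Tp j ∪ B₀) : ℤ) ≤ (Tp j).card + B₀.card := by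
      have ha := rk_le_card_right G (Finset.univ.biUnion Sp ∪ A₀) (Tp j ∪ B₀)
      have hb := Finset.card_union_le (Tp j) B₀
      have : rk G (Finset.univ.biUnion Sp ∪ A₀) (Tp j ∪ B₀) ≤ (Tp j).card + B₀.card :=
        le_trans ha hb
      exact_mod_cast this
    have h3 : ((∑ i : Fin m, (s i : ℤ)) + (A₀.card : ℤ)) = R := by exact_mod_cast hs
    have h4 : ((t j : ℤ)) ≤ (Tp j).card := by linarith
    exact_mod_cast h4
  have hcardt : ∀ j, t j = 0 ∨ t j = (Tp j).card := by
    intro j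
    by_cases h : (Tp j).card ≤ t j
    · exact Or.inr (le_antisymm (htle j) h)
    · exact Or.inl (hterm_t j h)
  refine ⟨fun i => if s i = 0 then ∅ else Sp i, fun j => if t j = 0 then ∅ else Tp j,
    ?_, ?_, ?_, ?_, ?_⟩
  · intro i; dsimp only; split_ifs with h
    · exact empty_subset _
    · exact Finset.Subset.refl _
  · intro i; dsimp only; split_ifs with h
    · simp [h]
    · rcases hcard i with h' | h'
      · exact absurd h' h
      · rw [h']
  · intro j; dsimp only; split_ifs with h
    · exact empty_subset _
    · exact Finset.Subset.refl _
  · intro j; dsimp only; split_ifs with h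
    · simp [h]
    · rcases hcardt j with h' | h'
      · exact absurd h' h
      · rw [h']
  · -- nonsingularity
    set Istar := Finset.univ.filter (fun i => s i ≠ 0) with hIstar
    set Kstar := Finset.univ.filter (fun j => t j ≠ 0) with hKstar
    have hAeq : Finset.univ.biUnion (fun i => if s i = 0 then ∅ else Sp i)
        = Istar.biUnion Sp := by
      ext y
      simp only [mem_biUnion, mem_univ, true_and, hIstar, mem_filter]
      constructor
      · rintro ⟨i, hy⟩
        by_cases h : s i = 0
        · rw [if_pos h] at hy; exact absurd hy (notMem_empty y)
        · rw [if_neg h] at hy; exact ⟨i, h, hy⟩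
      · rintro ⟨i, h, hy⟩
        exact ⟨i, by rw [if_neg h]; exact hy⟩
    have hBeq : Finset.univ.biUnion (fun j => if t j = 0 then ∅ else Tp j)
        = Kstar.biUnion Tp := by
      ext y
      simp only [mem_biUnion, mem_univ, true_and, hKstar, mem_filter]
      constructor
      · rintro ⟨j, hy⟩
        by_cases h : t j = 0
        · rw [if_pos h] at hy; exact absurd hy (notMem_empty y)
        · rw [if_neg h] at hy; exact ⟨j, h, hy⟩
      · rintro ⟨j, h, hy⟩
        exact ⟨j, by rw [if_neg h]; exact hy⟩
    rw [hAeq, hBeq]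
    have hsum : ∑ i ∈ Istar, s i = ∑ i, s i := Finset.sum_filter_ne_zero Finset.univ
    have hsumt : ∑ j ∈ Kstar, t j = ∑ j, t j := Finset.sum_filter_ne_zero Finset.univ
    -- cardinality of the row set
    have hdisjA : Disjoint (Istar.biUnion Sp) A₀ := by
      rw [Finset.disjoint_biUnion_left]
      exact fun i _ => (hA₀ i).symm
    have hdisjB : Disjoint (Kstar.biUnion Tp) B₀ := by
      rw [Finset.disjoint_biUnion_left]
      exact fun j _ => (hB₀ j).symm
    have hcardA : (Istar.biUnion Sp ∪ A₀).card = R := by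
      rw [Finset.card_union_of_disjoint hdisjA,
        Finset.card_biUnion (fun i _ j _ hij => hSd i j hij)]
      have : ∑ i ∈ Istar, (Sp i).card = ∑ i ∈ Istar, s i := by
        apply Finset.sum_congr rfl
        intro i hi
        rcases hcard i with h | h
        · exact absurd h (by simpa [hIstar] using hi)
        · rw [h]
      rw [this, hsum]
      omega
    have hcardB : (Kstar.biUnion Tp ∪ B₀).card = R := by
      rw [Finset.card_union_of_disjoint hdisjB,
        Finset.card_biUnion (fun i _ j _ hij => hTd i j hij)]
      have : ∑ j ∈ Kstar, (Tp j).card = ∑ j ∈ Kstar, t j := by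
        apply Finset.sum_congr rfl
        intro j hj
        rcases hcardt j with h | h
        · exact absurd h (by simpa [hKstar] using hj)
        · rw [h]
      rw [this, hsumt]
      omega
    have hrkge := hcond Istar Kstar
    have hrkle : rk G (Istar.biUnion Sp ∪ A₀) (Kstar.biUnion Tp ∪ B₀) ≤ R := by
      have := rk_le_card_left G (Istar.biUnion Sp ∪ A₀) (Kstar.biUnion Tp ∪ B₀)
      omega
    have hsums : (∑ i ∈ Istar, (s i : ℤ)) = ∑ i, (s i : ℤ) := by
      exact_mod_cast congrArg (Nat.cast : ℕ → ℤ) hsum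
    have hsumts : (∑ j ∈ Kstar, (t j : ℤ)) = ∑ j, (t j : ℤ) := by
      exact_mod_cast congrArg (Nat.cast : ℕ → ℤ) hsumt
    have hsZ : (∑ i : Fin m, (s i : ℤ)) + (A₀.card : ℤ) = R := by exact_mod_cast hs
    have htZ : (∑ j : Fin n, (t j : ℤ)) + (B₀.card : ℤ) = R := by exact_mod_cast ht
    have hrkeq : rk G (Istar.biUnion Sp ∪ A₀) (Kstar.biUnion Tp ∪ B₀) = R := by
      have : (R : ℤ) ≤ rk G (Istar.biUnion Sp ∪ A₀) (Kstar.biUnion Tp ∪ B₀) := by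
        rw [hsums, hsumts] at hrkge
        linarith
      have h2 : (R : ℤ) ≤ (rk G (Istar.biUnion Sp ∪ A₀) (Kstar.biUnion Tp ∪ B₀) : ℤ) := this
      have h3 : R ≤ rk G (Istar.biUnion Sp ∪ A₀) (Kstar.biUnion Tp ∪ B₀) := by exact_mod_cast h2
      omega
    rw [isNonsingularSub_iff]
    rw [hcardA, hcardB, hrkeq]
    exact ⟨rfl, rfl⟩

end StepColTerm

section MainAux
variable {F S T : Type*} [Field F] [Fintype S] [Fintype T] [DecidableEq S] [DecidableEq T]

lemma main_aux (G : Matrix S T F) {m n : ℕ} (N : ℕ) :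
    ∀ (Sp : Fin m → Finset S) (Tp : Fin n → Finset T) (s : Fin m → ℕ) (t : Fin n → ℕ)
      (A₀ : Finset S) (B₀ : Finset T) (R : ℕ),
      (∀ i j, i ≠ j → Disjoint (Sp i) (Sp j)) → (∀ i, Disjoint A₀ (Sp i)) →
      (∀ i j, i ≠ j → Disjoint (Tp i) (Tp j)) → (∀ j, Disjoint B₀ (Tp j)) →
      ((∑ i, s i) + A₀.card = R) → ((∑ j, t j) + B₀.card = R) →
      ((∑ i, if (Sp i).card ≤ s i then 0 else s i) +
        (∑ j, if (Tp j).card ≤ t j then 0 else t j) ≤ N) →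
      Cond G Sp Tp s t A₀ B₀ R →
      ∃ (a : Fin m → Finset S) (b : Fin n → Finset T),
        (∀ i, a i ⊆ Sp i) ∧ (∀ i, (a i).card = s i) ∧
        (∀ j, b j ⊆ Tp j) ∧ (∀ j, (b j).card = t j) ∧
        IsNonsingularSub G (Finset.univ.biUnion a ∪ A₀) (Finset.univ.biUnion b ∪ B₀) := by
  classical
  induction N with
  | zero =>
    intro Sp Tp s t A₀ B₀ R hSd hA₀ hTd hB₀ hs ht hN hcond
    apply terminal_case G hSd hA₀ hTd hB₀ hs ht hcond
    · intro i hni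
      have h1 : (if (Sp i).card ≤ s i then 0 else s i) ≤
          ∑ i', (if (Sp i').card ≤ s i' then 0 else s i') :=
        Finset.single_le_sum (f := fun i' => if (Sp i').card ≤ s i' then 0 else s i')
          (fun _ _ => Nat.zero_le _) (mem_univ i)
      rw [if_neg hni] at h1
      omega
    · intro j hnj
      have h1 : (if (Tp j).card ≤ t j then 0 else t j) ≤
          ∑ j', (if (Tp j').card ≤ t j' then 0 else t j') :=
        Finset.single_le_sum (f := fun j' => if (Tp j').card ≤ t j' then 0 else t j')
          (fun _ _ => Nat.zero_le _) (mem_univ j)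
      rw [if_neg hnj] at h1
      omega
  | succ N ih =>
    intro Sp Tp s t A₀ B₀ R hSd hA₀ hTd hB₀ hs ht hN hcond
    by_cases hrow : ∃ i, ¬((Sp i).card ≤ s i) ∧ s i ≠ 0
    · obtain ⟨i₀, hni₀, hsi₀⟩ := hrow
      obtain ⟨x, hxSp, hnc⟩ := step_row G hSd hA₀ hTd hB₀ ht hcond i₀ hsi₀
      have hxA₀ : x ∉ A₀ := Finset.disjoint_right.1 (hA₀ i₀) hxSp
      set Sp' := Function.update Sp i₀ ((Sp i₀).erase x) with hSp'
      set s' := Function.update s i₀ (s i₀ - 1) with hs'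
      have hsub' : ∀ i, Sp' i ⊆ Sp i := by
        intro i
        by_cases h : i = i₀
        · rw [h, hSp', Function.update_self]; exact erase_subset _ _
        · rw [hSp', Function.update_of_ne h]
      have hSd' : ∀ i j, i ≠ j → Disjoint (Sp' i) (Sp' j) := fun i j hij =>
        Finset.disjoint_of_subset_left (hsub' i)
          (Finset.disjoint_of_subset_right (hsub' j) (hSd i j hij))
      have hA₀' : ∀ i, Disjoint (insert x A₀) (Sp' i) := by
        intro i
        rw [Finset.disjoint_insert_left]
        constructor
        · by_cases h : i = i₀
          · rw [h, hSp', Function.update_self]; exact notMem_erase _ _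
          · rw [hSp', Function.update_of_ne h]
            exact Finset.disjoint_left.1 (hSd i₀ i (fun h' => h h'.symm)) hxSp
        · exact Finset.disjoint_of_subset_right (hsub' i) (hA₀ i)
      have hsum' : (∑ i, s' i) + (insert x A₀).card = R := by
        rw [hs', Finset.sum_update_of_mem (mem_univ i₀),
          Finset.card_insert_of_notMem hxA₀]
        have h2 := Finset.sum_erase_add Finset.univ s (mem_univ i₀)
        rw [Finset.sdiff_singleton_eq_erase]
        omega
      have hN' : (∑ i, if (Sp' i).card ≤ s' i then 0 else s' i) +
          (∑ j, if (Tp j).card ≤ t j then 0 else t j) ≤ N := by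
        have hterm : ∀ i ∈ Finset.univ.erase i₀,
            (if (Sp' i).card ≤ s' i then 0 else s' i) =
            (if (Sp i).card ≤ s i then 0 else s i) := by
          intro i hi
          have h : i ≠ i₀ := (Finset.mem_erase.1 hi).1
          rw [hSp', hs', Function.update_of_ne h, Function.update_of_ne h]
        have e1 := Finset.sum_erase_add Finset.univ
          (fun i => if (Sp' i).card ≤ s' i then 0 else s' i) (mem_univ i₀)
        have e2 := Finset.sum_erase_add Finset.univ
          (fun i => if (Sp i).card ≤ s i then 0 else s i) (mem_univ i₀)
        have e3 : ∑ i ∈ Finset.univ.erase i₀, (if (Sp' i).card ≤ s' i then 0 else s' i)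
            = ∑ i ∈ Finset.univ.erase i₀, (if (Sp i).card ≤ s i then 0 else s i) :=
          Finset.sum_congr rfl hterm
        have hiterm : (if (Sp' i₀).card ≤ s' i₀ then 0 else s' i₀) ≤ s i₀ - 1 := by
          rw [hSp', hs', Function.update_self, Function.update_self,
            Finset.card_erase_of_mem hxSp]
          split_ifs
          · omega
          · omega
        have hiterm2 : (if (Sp i₀).card ≤ s i₀ then 0 else s i₀) = s i₀ := if_neg hni₀
        omega
      obtain ⟨a, b, hasub, hacard, hbsub, hbcard, hns⟩ :=
        ih Sp' Tp s' t (insert x A₀) B₀ R hSd' hA₀' hTd hB₀ hsum' ht hN' hnc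
      have hxa : x ∉ a i₀ := by
        intro hc
        have := hasub i₀ hc
        rw [hSp', Function.update_self] at this
        exact notMem_erase x _ this
      refine ⟨Function.update a i₀ (insert x (a i₀)), b, ?_, ?_, hbsub, hbcard, ?_⟩
      · intro i
        by_cases h : i = i₀
        · rw [h, Function.update_self]
          apply Finset.insert_subset hxSp
          exact (hasub i₀).trans (hsub' i₀)
        · rw [Function.update_of_ne h]
          exact (hasub i).trans (hsub' i)
      · intro i
        by_cases h : i = i₀
        · rw [h, Function.update_self, Finset.card_insert_of_notMem hxa, hacard i₀,
            hs', Function.update_self]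
          omega
        · rw [Function.update_of_ne h, hacard i, hs', Function.update_of_ne h]
      · have hset : Finset.univ.biUnion (Function.update a i₀ (insert x (a i₀))) ∪ A₀
            = Finset.univ.biUnion a ∪ insert x A₀ := by
          ext y
          simp only [mem_union, mem_biUnion, mem_univ, true_and, mem_insert]
          constructor
          · rintro (⟨i, hy⟩ | h)
            · by_cases h' : i = i₀
              · rw [h', Function.update_self, mem_insert] at hy
                rcases hy with rfl | hy
                · exact Or.inr (Or.inl rfl)
                · exact Or.inl ⟨i₀, hy⟩
              · rw [Function.update_of_ne h'] at hy
                exact Or.inl ⟨i, hy⟩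
            · exact Or.inr (Or.inr h)
          · rintro (⟨i, hy⟩ | (rfl | h))
            · by_cases h' : i = i₀
              · subst h'
                exact Or.inl ⟨i, by rw [Function.update_self]; exact mem_insert_of_mem hy⟩
              · exact Or.inl ⟨i, by rw [Function.update_of_ne h']; exact hy⟩
            · exact Or.inl ⟨i₀, by rw [Function.update_self]; exact mem_insert_self _ _⟩
            · exact Or.inr h
        rw [hset]
        exact hns
    · by_cases hcol : ∃ j, ¬((Tp j).card ≤ t j) ∧ t j ≠ 0
      · obtain ⟨j₀, hnj₀, htj₀⟩ := hcol
        obtain ⟨y, hyTp, hnc⟩ := step_col G hSd hA₀ hTd hB₀ hs hcond j₀ htj₀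
        have hyB₀ : y ∉ B₀ := Finset.disjoint_right.1 (hB₀ j₀) hyTp
        set Tp' := Function.update Tp j₀ ((Tp j₀).erase y) with hTp'
        set t' := Function.update t j₀ (t j₀ - 1) with ht'
        have hsub' : ∀ j, Tp' j ⊆ Tp j := by
          intro j
          by_cases h : j = j₀
          · rw [h, hTp', Function.update_self]; exact erase_subset _ _
          · rw [hTp', Function.update_of_ne h]
        have hTd' : ∀ i j, i ≠ j → Disjoint (Tp' i) (Tp' j) := fun i j hij =>
          Finset.disjoint_of_subset_left (hsub' i)
            (Finset.disjoint_of_subset_right (hsub' j) (hTd i j hij))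
        have hB₀' : ∀ j, Disjoint (insert y B₀) (Tp' j) := by
          intro j
          rw [Finset.disjoint_insert_left]
          constructor
          · by_cases h : j = j₀
            · rw [h, hTp', Function.update_self]; exact notMem_erase _ _
            · rw [hTp', Function.update_of_ne h]
              exact Finset.disjoint_left.1 (hTd j₀ j (fun h' => h h'.symm)) hyTp
          · exact Finset.disjoint_of_subset_right (hsub' j) (hB₀ j)
        have hsum' : (∑ j, t' j) + (insert y B₀).card = R := by
          rw [ht', Finset.sum_update_of_mem (mem_univ j₀),
            Finset.card_insert_of_notMem hyB₀]
          have h2 := Finset.sum_erase_add Finset.univ t (mem_univ j₀)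
          rw [Finset.sdiff_singleton_eq_erase]
          omega
        have hN' : (∑ i, if (Sp i).card ≤ s i then 0 else s i) +
            (∑ j, if (Tp' j).card ≤ t' j then 0 else t' j) ≤ N := by
          have hterm : ∀ j ∈ Finset.univ.erase j₀,
              (if (Tp' j).card ≤ t' j then 0 else t' j) =
              (if (Tp j).card ≤ t j then 0 else t j) := by
            intro j hj
            have h : j ≠ j₀ := (Finset.mem_erase.1 hj).1
            rw [hTp', ht', Function.update_of_ne h, Function.update_of_ne h]
          have e1 := Finset.sum_erase_add Finset.univ
            (fun j => if (Tp' j).card ≤ t' j then 0 else t' j) (mem_univ j₀)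
          have e2 := Finset.sum_erase_add Finset.univ
            (fun j => if (Tp j).card ≤ t j then 0 else t j) (mem_univ j₀)
          have e3 : ∑ j ∈ Finset.univ.erase j₀, (if (Tp' j).card ≤ t' j then 0 else t' j)
              = ∑ j ∈ Finset.univ.erase j₀, (if (Tp j).card ≤ t j then 0 else t j) :=
            Finset.sum_congr rfl hterm
          have hiterm : (if (Tp' j₀).card ≤ t' j₀ then 0 else t' j₀) ≤ t j₀ - 1 := by
            rw [hTp', ht', Function.update_self, Function.update_self,
              Finset.card_erase_of_mem hyTp]
            split_ifs
            · omega
            · omega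
          have hiterm2 : (if (Tp j₀).card ≤ t j₀ then 0 else t j₀) = t j₀ := if_neg hnj₀
          omega
        obtain ⟨a, b, hasub, hacard, hbsub, hbcard, hns⟩ :=
          ih Sp Tp' s t' A₀ (insert y B₀) R hSd hA₀ hTd' hB₀' hs hsum' hN' hnc
        have hyb : y ∉ b j₀ := by
          intro hc
          have := hbsub j₀ hc
          rw [hTp', Function.update_self] at this
          exact notMem_erase y _ this
        refine ⟨a, Function.update b j₀ (insert y (b j₀)), hasub, hacard, ?_, ?_, ?_⟩
        · intro j
          by_cases h : j = j₀
          · rw [h, Function.update_self]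
            apply Finset.insert_subset hyTp
            exact (hbsub j₀).trans (hsub' j₀)
          · rw [Function.update_of_ne h]
            exact (hbsub j).trans (hsub' j)
        · intro j
          by_cases h : j = j₀
          · rw [h, Function.update_self, Finset.card_insert_of_notMem hyb, hbcard j₀,
              ht', Function.update_self]
            omega
          · rw [Function.update_of_ne h, hbcard j, ht', Function.update_of_ne h]
        · have hset : Finset.univ.biUnion (Function.update b j₀ (insert y (b j₀))) ∪ B₀
              = Finset.univ.biUnion b ∪ insert y B₀ := by
            ext z
            simp only [mem_union, mem_biUnion, mem_univ, true_and, mem_insert]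
            constructor
            · rintro (⟨j, hz⟩ | h)
              · by_cases h' : j = j₀
                · rw [h', Function.update_self, mem_insert] at hz
                  rcases hz with rfl | hz
                  · exact Or.inr (Or.inl rfl)
                  · exact Or.inl ⟨j₀, hz⟩
                · rw [Function.update_of_ne h'] at hz
                  exact Or.inl ⟨j, hz⟩
              · exact Or.inr (Or.inr h)
            · rintro (⟨j, hz⟩ | (rfl | h))
              · by_cases h' : j = j₀
                · subst h'
                  exact Or.inl ⟨j, by rw [Function.update_self]; exact mem_insert_of_mem hz⟩
                · exact Or.inl ⟨j, by rw [Function.update_of_ne h']; exact hz⟩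
              · exact Or.inl ⟨j₀, by rw [Function.update_self]; exact mem_insert_self _ _⟩
              · exact Or.inr h
          rw [hset]
          exact hns
      · push_neg at hrow hcol
        apply terminal_case G hSd hA₀ hTd hB₀ hs ht hcond
        · exact fun i h => hrow i (lt_of_not_ge h)
        · exact fun j h => hcol j (lt_of_not_ge h)

end MainAux

section Final
variable {F S T : Type*} [Field F] [Fintype S] [Fintype T] [DecidableEq S] [DecidableEq T]

lemma rk_union_le_card_add_right (G : Matrix S T F) (U : Finset S) (V W : Finset T) :
    rk G U (V ∪ W) ≤ rk G U V + W.card := by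
  have h := rk_union_le_card_add Gᵀ V W U
  rwa [rk_transpose, rk_transpose] at h

theorem block_matrix_transversal' {m n : ℕ} (G : Matrix S T F)
    (Sp : Fin m → Finset S) (Tp : Fin n → Finset T)
    (hSdisj : ∀ i j, i ≠ j → Disjoint (Sp i) (Sp j))
    (hTdisj : ∀ i j, i ≠ j → Disjoint (Tp i) (Tp j))
    (s : Fin m → ℕ) (t : Fin n → ℕ) (R : ℕ)
    (hs : ∑ i, s i = R) (ht : ∑ j, t j = R) :
    (∃ (a : Fin m → Finset S) (b : Fin n → Finset T),
        (∀ i, a i ⊆ Sp i) ∧ (∀ i, (a i).card = s i) ∧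
        (∀ j, b j ⊆ Tp j) ∧ (∀ j, (b j).card = t j) ∧
        IsNonsingularSub G (Finset.univ.biUnion a) (Finset.univ.biUnion b)) ↔
      ∀ (I : Finset (Fin m)) (K : Finset (Fin n)),
        (∑ i ∈ I, (s i : ℤ)) + (∑ k ∈ K, (t k : ℤ)) - R ≤
          (rk G (I.biUnion Sp) (K.biUnion Tp) : ℤ) := by
  classical
  constructor
  · rintro ⟨a, b, hasub, hacard, hbsub, hbcard, hns⟩ I K
    set A := Finset.univ.biUnion a with hA
    set B := Finset.univ.biUnion b with hB
    have hadisj : ∀ i j, i ≠ j → Disjoint (a i) (a j) := fun i j hij =>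
      Finset.disjoint_of_subset_left (hasub i)
        (Finset.disjoint_of_subset_right (hasub j) (hSdisj i j hij))
    have hbdisj : ∀ i j, i ≠ j → Disjoint (b i) (b j) := fun i j hij =>
      Finset.disjoint_of_subset_left (hbsub i)
        (Finset.disjoint_of_subset_right (hbsub j) (hTdisj i j hij))
    have hAcard : A.card = R := by
      rw [hA, Finset.card_biUnion (fun i _ j _ h => hadisj i j h)]
      rw [Finset.sum_congr rfl (fun i _ => hacard i)]
      exact hs
    have hBcard : B.card = R := by
      rw [hB, Finset.card_biUnion (fun i _ j _ h => hbdisj i j h)]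
      rw [Finset.sum_congr rfl (fun j _ => hbcard j)]
      exact ht
    obtain ⟨hcardeq, hrk⟩ := (isNonsingularSub_iff G A B).1 hns
    set AI := I.biUnion a with hAI
    set BK := K.biUnion b with hBK
    have hAIsub : AI ⊆ A := biUnion_subset_biUnion_of_subset_left a (subset_univ I)
    have hBKsub : BK ⊆ B := biUnion_subset_biUnion_of_subset_left b (subset_univ K)
    have hAIcard : AI.card = ∑ i ∈ I, s i := by
      rw [hAI, Finset.card_biUnion (fun i _ j _ h => hadisj i j h)]
      exact Finset.sum_congr rfl (fun i _ => hacard i)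
    have hBKcard : BK.card = ∑ k ∈ K, t k := by
      rw [hBK, Finset.card_biUnion (fun i _ j _ h => hbdisj i j h)]
      exact Finset.sum_congr rfl (fun j _ => hbcard j)
    have h1 : rk G A B ≤ rk G AI B + (A \ AI).card := by
      have he : A = AI ∪ (A \ AI) := (Finset.union_sdiff_of_subset hAIsub).symm
      calc rk G A B = rk G (AI ∪ (A \ AI)) B := by rw [← he]
        _ ≤ rk G AI B + (A \ AI).card := rk_union_le_card_add G AI (A \ AI) B
    have h2 : rk G AI B ≤ rk G AI BK + (B \ BK).card := by
      have he : B = BK ∪ (B \ BK) := (Finset.union_sdiff_of_subset hBKsub).symm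
      calc rk G AI B = rk G AI (BK ∪ (B \ BK)) := by rw [← he]
        _ ≤ rk G AI BK + (B \ BK).card := rk_union_le_card_add_right G AI BK (B \ BK)
    have h3 : rk G AI BK ≤ rk G (I.biUnion Sp) (K.biUnion Tp) :=
      le_trans (rk_mono_left G BK (biUnion_mono (fun i _ => hasub i)))
        (rk_mono_right G (I.biUnion Sp) (biUnion_mono (fun j _ => hbsub j)))
    have hsdA : (A \ AI).card = A.card - AI.card := Finset.card_sdiff_of_subset hAIsub
    have hsdB : (B \ BK).card = B.card - BK.card := Finset.card_sdiff_of_subset hBKsub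
    have hAIle : AI.card ≤ A.card := Finset.card_le_card hAIsub
    have hBKle : BK.card ≤ B.card := Finset.card_le_card hBKsub
    have hgoal : (∑ i ∈ I, s i) + (∑ k ∈ K, t k) ≤ rk G (I.biUnion Sp) (K.biUnion Tp) + R := by
      omega
    have hgoal' : ((∑ i ∈ I, s i : ℕ) : ℤ) + ((∑ k ∈ K, t k : ℕ) : ℤ) - R ≤
        (rk G (I.biUnion Sp) (K.biUnion Tp) : ℤ) := by
      have hz : ((∑ i ∈ I, s i : ℕ) : ℤ) + ((∑ k ∈ K, t k : ℕ) : ℤ) ≤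
          (rk G (I.biUnion Sp) (K.biUnion Tp) : ℤ) + R := by exact_mod_cast hgoal
      linarith
    rw [Nat.cast_sum, Nat.cast_sum] at hgoal'
    exact hgoal'
  · intro hcond
    have hcond' : Cond G Sp Tp s t ∅ ∅ R := by
      intro I K
      rw [Finset.union_empty, Finset.union_empty]
      have := hcond I K
      simp only [Finset.card_empty, Nat.cast_zero, add_zero]
      linarith
    obtain ⟨a, b, h1, h2, h3, h4, h5⟩ := main_aux G
      ((∑ i, if (Sp i).card ≤ s i then 0 else s i) +
        (∑ j, if (Tp j).card ≤ t j then 0 else t j))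
      Sp Tp s t ∅ ∅ R hSdisj (fun i => Finset.disjoint_empty_left _)
      hTdisj (fun j => Finset.disjoint_empty_left _)
      (by rw [Finset.card_empty]; omega) (by rw [Finset.card_empty]; omega)
      (le_refl _) hcond'
    exact ⟨a, b, h1, h2, h3, h4, by rwa [Finset.union_empty, Finset.union_empty] at h5⟩

end Final


theorem block_matrix_transversal {F S T : Type*} [Field F] [Fintype S] [Fintype T]
    [DecidableEq S] [DecidableEq T]
    (G : Matrix S T F) (m n : ℕ) (Sp : Fin m → Finset S) (Tp : Fin n → Finset T)
    (hSdisj : ∀ i j, i ≠ j → Disjoint (Sp i) (Sp j))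
    (hScover : Finset.univ.biUnion Sp = (Finset.univ : Finset S))
    (hTdisj : ∀ i j, i ≠ j → Disjoint (Tp i) (Tp j))
    (hTcover : Finset.univ.biUnion Tp = (Finset.univ : Finset T))
    (s : Fin m → ℕ) (t : Fin n → ℕ) (R : ℕ)
    (hs : ∑ i, s i = R) (ht : ∑ j, t j = R) :
    (∃ (a : Fin m → Finset S) (b : Fin n → Finset T),
        (∀ i, a i ⊆ Sp i) ∧ (∀ i, (a i).card = s i) ∧
        (∀ j, b j ⊆ Tp j) ∧ (∀ j, (b j).card = t j) ∧
        IsNonsingularSub G (Finset.univ.biUnion a) (Finset.univ.biUnion b)) ↔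
      ∀ (I : Finset (Fin m)) (K : Finset (Fin n)),
        (∑ i ∈ I, (s i : ℤ)) + (∑ k ∈ K, (t k : ℤ)) - R ≤
          (rk G (I.biUnion Sp) (K.biUnion Tp) : ℤ) :=
  block_matrix_transversal' G Sp Tp hSdisj hTdisj s t R hs ht
end

section
/- Necessity direction of the block-matrix transversal theorem: if there exist subsets 𝐬ᵢ ⊆ Sᵢ with |𝐬ᵢ| = sᵢ and 𝐭ⱼ ⊆ Tⱼ with |𝐭ⱼ| = tⱼ (where Σ sᵢ = Σ tⱼ = R) such that G(⋃𝐬ᵢ, ⋃𝐭ⱼ) is nonsingular, then for every I ⊆ {1,…,m} and K ⊆ {1,…,n}, rank(G(⋃_{i∈I} Sᵢ, ⋃_{k∈K} T_k)) ≥ Σ_{i∈I} sᵢ + Σ_{k∈K} t_k − R. -/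
open Matrix

section AuxRank
variable {F : Type*} [Field F]

lemma rank_submatrix_le_general {m n m' n' : Type*} [Fintype m] [Fintype n] [Fintype m'] [Fintype n']
    (A : Matrix m n F) (f : m' → m) (g : n' → n) :
    (A.submatrix f g).rank ≤ A.rank := by
  have h1 : (A.submatrix f (id : n → n)).rank ≤ A.rank := by
    have : (A.submatrix f id).mulVecLin = (LinearMap.funLeft F F f).comp A.mulVecLin := by
      ext v i
      simp [Matrix.mulVecLin, Matrix.mulVec, Matrix.submatrix, dotProduct]
    rw [Matrix.rank, this, LinearMap.range_comp]
    exact (Submodule.finrank_map_le _ _).trans (le_of_eq rfl)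
  refine le_trans ?_ h1
  rw [Matrix.rank_eq_finrank_span_cols, Matrix.rank_eq_finrank_span_cols]
  apply Submodule.finrank_mono
  apply Submodule.span_mono
  rintro _ ⟨j, rfl⟩
  exact ⟨g j, by ext i; rfl⟩

lemma rank_le_colsplit {m n α β : Type*} [Fintype m] [Fintype n] [Fintype α] [Fintype β]
    (A : Matrix m n F) (g₁ : α → n) (g₂ : β → n)
    (h : Set.range g₁ ∪ Set.range g₂ = Set.univ) :
    A.rank ≤ (A.submatrix id g₁).rank + (A.submatrix id g₂).rank := by
  rw [Matrix.rank_eq_finrank_span_cols, Matrix.rank_eq_finrank_span_cols,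
    Matrix.rank_eq_finrank_span_cols]
  have h1 : (A.submatrix id g₁).col = A.col ∘ g₁ := by ext j i; rfl
  have h2 : (A.submatrix id g₂).col = A.col ∘ g₂ := by ext j i; rfl
  have hr : Set.range A.col = Set.range (A.col ∘ g₁) ∪ Set.range (A.col ∘ g₂) := by
    rw [Set.range_comp, Set.range_comp, ← Set.image_union, h, Set.image_univ]
  rw [h1, h2, hr, Submodule.span_union]
  exact Submodule.finrank_add_le_finrank_add_finrank _ _

lemma rank_le_rowsplit {m n α β : Type*} [Fintype m] [Fintype n] [Fintype α] [Fintype β]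
    (A : Matrix m n F) (f₁ : α → m) (f₂ : β → m)
    (h : Set.range f₁ ∪ Set.range f₂ = Set.univ) :
    A.rank ≤ (A.submatrix f₁ id).rank + (A.submatrix f₂ id).rank := by
  have := rank_le_colsplit (F := F) Aᵀ f₁ f₂ h
  rwa [Matrix.rank_transpose, show Aᵀ.submatrix id f₁ = (A.submatrix f₁ id)ᵀ from rfl,
    show Aᵀ.submatrix id f₂ = (A.submatrix f₂ id)ᵀ from rfl,
    Matrix.rank_transpose, Matrix.rank_transpose] at this

end AuxRank

theorem block_matrix_transversal_necessity {F S T : Type*} [Field F] [Fintype S] [Fintype T]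
    [DecidableEq S] [DecidableEq T]
    (G : Matrix S T F) (m n : ℕ) (Sp : Fin m → Finset S) (Tp : Fin n → Finset T)
    (hSdisj : ∀ i j, i ≠ j → Disjoint (Sp i) (Sp j))
    (hScover : Finset.univ.biUnion Sp = (Finset.univ : Finset S))
    (hTdisj : ∀ i j, i ≠ j → Disjoint (Tp i) (Tp j))
    (hTcover : Finset.univ.biUnion Tp = (Finset.univ : Finset T))
    (s : Fin m → ℕ) (t : Fin n → ℕ) (R : ℕ)
    (hs : ∑ i, s i = R) (ht : ∑ j, t j = R)
    (a : Fin m → Finset S) (b : Fin n → Finset T)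
    (ha : ∀ i, a i ⊆ Sp i) (hacard : ∀ i, (a i).card = s i)
    (hb : ∀ j, b j ⊆ Tp j) (hbcard : ∀ j, (b j).card = t j)
    (hns : IsNonsingularSub G (Finset.univ.biUnion a) (Finset.univ.biUnion b)) :
    ∀ (I : Finset (Fin m)) (K : Finset (Fin n)),
      (∑ i ∈ I, (s i : ℤ)) + (∑ k ∈ K, (t k : ℤ)) - R ≤
        (rk G (I.biUnion Sp) (K.biUnion Tp) : ℤ) := by
  intro I K
  set A : Finset S := Finset.univ.biUnion a with hA
  set B : Finset T := Finset.univ.biUnion b with hB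
  obtain ⟨e, hdet⟩ := hns
  set P : Finset S := I.biUnion a with hP
  set Q : Finset T := K.biUnion b with hQ
  have hadisj : ∀ i ∈ (Finset.univ : Finset (Fin m)), ∀ j ∈ Finset.univ, i ≠ j →
      Disjoint (a i) (a j) := fun i _ j _ hij =>
    ((hSdisj i j hij).mono (ha i) (ha j))
  have hbdisj : ∀ i ∈ (Finset.univ : Finset (Fin n)), ∀ j ∈ Finset.univ, i ≠ j →
      Disjoint (b i) (b j) := fun i _ j _ hij =>
    ((hTdisj i j hij).mono (hb i) (hb j))
  have hAcard : A.card = R := by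
    rw [hA, Finset.card_biUnion hadisj]
    simp only [hacard]; exact hs
  have hBcard : B.card = R := by
    rw [hB, Finset.card_biUnion hbdisj]
    simp only [hbcard]; exact ht
  have hPcard : P.card = ∑ i ∈ I, s i := by
    rw [hP, Finset.card_biUnion (fun i _ j _ hij => hadisj i (Finset.mem_univ i) j
      (Finset.mem_univ j) hij)]
    exact Finset.sum_congr rfl fun i _ => hacard i
  have hQcard : Q.card = ∑ k ∈ K, t k := by
    rw [hQ, Finset.card_biUnion (fun i _ j _ hij => hbdisj i (Finset.mem_univ i) j
      (Finset.mem_univ j) hij)]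
    exact Finset.sum_congr rfl fun k _ => hbcard k
  have hPA : P ⊆ A := Finset.biUnion_subset_biUnion_of_subset_left a (Finset.subset_univ I)
  have hQB : Q ⊆ B := Finset.biUnion_subset_biUnion_of_subset_left b (Finset.subset_univ K)
  have hPS : P ⊆ I.biUnion Sp := by
    rw [hP]
    exact Finset.biUnion_subset.mpr fun i hi =>
      (ha i).trans (Finset.subset_biUnion_of_mem Sp hi)
  have hQT : Q ⊆ K.biUnion Tp := by
    rw [hQ]
    exact Finset.biUnion_subset.mpr fun k hk =>
      (hb k).trans (Finset.subset_biUnion_of_mem Tp hk)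
  set M : Matrix A B F := G.submatrix (fun i : A => (i : S)) (fun j : B => (j : T)) with hM
  -- rank of M is at least R
  have hMrank : R ≤ M.rank := by
    have hunit : IsUnit (M.submatrix id ⇑e) :=
      (Matrix.isUnit_iff_isUnit_det _).mpr (isUnit_iff_ne_zero.mpr hdet)
    have h1 : (M.submatrix id ⇑e).rank = Fintype.card A :=
      Matrix.rank_of_isUnit _ hunit
    have h2 : (M.submatrix id ⇑e).rank ≤ M.rank := rank_submatrix_le_general M id ⇑e
    rw [h1, Fintype.card_coe, hAcard] at h2
    exact h2
  -- row and column inclusion maps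
  set p : ↥P → ↥A := fun x => ⟨x.1, hPA x.2⟩ with hp
  set pc : ↥(A \ P) → ↥A :=
    fun x => ⟨x.1, (Finset.mem_sdiff.mp x.2).1⟩ with hpc
  set q : ↥Q → ↥B := fun x => ⟨x.1, hQB x.2⟩ with hq
  set qc : ↥(B \ Q) → ↥B :=
    fun x => ⟨x.1, (Finset.mem_sdiff.mp x.2).1⟩ with hqc
  have hpsurj : Set.range p ∪ Set.range pc = Set.univ := by
    apply Set.eq_univ_of_forall
    intro y
    by_cases hy : y.1 ∈ P
    · exact Or.inl ⟨⟨y.1, hy⟩, Subtype.ext rfl⟩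
    · exact Or.inr ⟨⟨y.1, Finset.mem_sdiff.mpr ⟨y.2, hy⟩⟩, Subtype.ext rfl⟩
  have hqsurj : Set.range q ∪ Set.range qc = Set.univ := by
    apply Set.eq_univ_of_forall
    intro y
    by_cases hy : y.1 ∈ Q
    · exact Or.inl ⟨⟨y.1, hy⟩, Subtype.ext rfl⟩
    · exact Or.inr ⟨⟨y.1, Finset.mem_sdiff.mpr ⟨y.2, hy⟩⟩, Subtype.ext rfl⟩
  have h1 : M.rank ≤ (M.submatrix p id).rank + (M.submatrix pc id).rank :=
    rank_le_rowsplit M p pc hpsurj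
  have h2 : (M.submatrix pc id).rank ≤ (A \ P).card := by
    simpa only [Fintype.card_coe] using (M.submatrix pc id).rank_le_card_height
  have h3 : (M.submatrix p id).rank ≤
      ((M.submatrix p id).submatrix id q).rank + ((M.submatrix p id).submatrix id qc).rank :=
    rank_le_colsplit (M.submatrix p id) q qc hqsurj
  have h4 : ((M.submatrix p id).submatrix id qc).rank ≤ (B \ Q).card := by
    simpa only [Fintype.card_coe] using ((M.submatrix p id).submatrix id qc).rank_le_card_width
  have h5 : ((M.submatrix p id).submatrix id q).rank ≤ rk G (I.biUnion Sp) (K.biUnion Tp) := by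
    have heq : (M.submatrix p id).submatrix id q =
        (G.submatrix (fun i : ↥(I.biUnion Sp) => (i : S))
          (fun j : ↥(K.biUnion Tp) => (j : T))).submatrix
          (fun x : ↥P => (⟨x.1, hPS x.2⟩ : ↥(I.biUnion Sp)))
          (fun y : ↥Q => (⟨y.1, hQT y.2⟩ : ↥(K.biUnion Tp))) := rfl
    rw [heq, rk]
    exact rank_submatrix_le_general _ _ _
  have hcardAP : (A \ P).card = R - ∑ i ∈ I, s i := by
    rw [Finset.card_sdiff_of_subset hPA, hAcard, hPcard]
  have hcardBQ : (B \ Q).card = R - ∑ k ∈ K, t k := by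
    rw [Finset.card_sdiff_of_subset hQB, hBcard, hQcard]
  have hPle : ∑ i ∈ I, s i ≤ R := hPcard ▸ hAcard ▸ Finset.card_le_card hPA
  have hQle : ∑ k ∈ K, t k ≤ R := hQcard ▸ hBcard ▸ Finset.card_le_card hQB
  rw [hcardAP] at h2
  rw [hcardBQ] at h4
  have key : R ≤ rk G (I.biUnion Sp) (K.biUnion Tp) + (R - ∑ k ∈ K, t k)
      + (R - ∑ i ∈ I, s i) := by omega
  push_cast
  rw [← Nat.cast_sum, ← Nat.cast_sum]
  omega
end

section
/- Rado–Hall theorem for matroids: Let (E,r) be a matroid with finite ground set and A₁,…,A_n ⊆ E, and let ℓ₁,…,ℓ_n be non-negative integers. There exist pairwise disjoint subsets 𝐚ᵢ ⊆ Aᵢ with |𝐚ᵢ| = ℓᵢ such that 𝐚₁ ∪ ⋯ ∪ 𝐚_n is independent, if and only if for every I ⊆ {1,…,n}, r(⋃_{i∈I} Aᵢ) ≥ Σ_{i∈I} ℓᵢ. -/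
lemma indep_subset {E : Type*} [DecidableEq E] (r : Finset E → ℕ)
    (hle : ∀ A : Finset E, r A ≤ A.card)
    (hsub : ∀ A B : Finset E, r (A ∪ B) + r (A ∩ B) ≤ r A + r B)
    {S T : Finset E} (hST : T ⊆ S) (hS : r S = S.card) : r T = T.card := by
  have h1 := hsub T (S \ T)
  rw [Finset.union_sdiff_of_subset hST, Finset.inter_sdiff_self] at h1
  have h2 := hle (S \ T)
  have h3 := hle T
  have h4 : (S \ T).card = S.card - T.card := Finset.card_sdiff_of_subset hST
  have h5 : T.card ≤ S.card := Finset.card_le_card hST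
  omega

lemma rado_base {E : Type*} [Fintype E] [DecidableEq E] (r : Finset E → ℕ)
    (hle : ∀ A : Finset E, r A ≤ A.card)
    {ι : Type*} [Fintype ι] [DecidableEq ι] (B : ι → Finset E)
    (hsmall : ∀ i, (B i).card ≤ 1)
    (hcond : ∀ I : Finset ι, I.card ≤ r (I.biUnion B)) :
    ∃ f : ι → E, Function.Injective f ∧ (∀ i, f i ∈ B i) ∧
      r (Finset.univ.image f) = (Finset.univ.image f).card := by
  have hB1 : ∀ i, (B i).card = 1 := by
    intro i
    have h1 := hcond {i}
    simp only [Finset.card_singleton, Finset.singleton_biUnion] at h1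
    have := hle (B i)
    have := hsmall i
    omega
  have hne : ∀ i, (B i).Nonempty := fun i => Finset.card_pos.mp (by rw [hB1 i]; norm_num)
  set f : ι → E := fun i => (hne i).choose with hf
  have hmem : ∀ i, f i ∈ B i := fun i => (hne i).choose_spec
  have himg : Finset.univ.image f = Finset.univ.biUnion B := by
    ext e
    simp only [Finset.mem_image, Finset.mem_biUnion, Finset.mem_univ, true_and]
    constructor
    · rintro ⟨i, rfl⟩; exact ⟨i, hmem i⟩
    · rintro ⟨j, hj⟩
      exact ⟨j, (Finset.card_le_one.mp (hsmall j) e hj (f j) (hmem j)).symm⟩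
  have h1 : Fintype.card ι ≤ r (Finset.univ.image f) := by
    rw [himg]
    simpa using hcond Finset.univ
  have h2 : (Finset.univ.image f).card ≤ Fintype.card ι :=
    Finset.card_image_le.trans_eq Finset.card_univ
  have h3 := hle (Finset.univ.image f)
  have hrc : r (Finset.univ.image f) = (Finset.univ.image f).card := by omega
  have hcardeq : (Finset.univ.image f).card = (Finset.univ : Finset ι).card := by
    have hcu : (Finset.univ : Finset ι).card = Fintype.card ι := Finset.card_univ
    omega
  have hinj : Function.Injective f := by
    have := Finset.card_image_iff.mp hcardeq
    rw [Finset.coe_univ] at this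
    exact Set.injOn_univ.mp this
  exact ⟨f, hinj, hmem, hrc⟩

lemma rado_sdr_aux {E : Type*} [Fintype E] [DecidableEq E] (r : Finset E → ℕ)
    (hle : ∀ A : Finset E, r A ≤ A.card)
    (hmono : ∀ A B : Finset E, A ⊆ B → r A ≤ r B)
    (hsub : ∀ A B : Finset E, r (A ∪ B) + r (A ∩ B) ≤ r A + r B)
    {ι : Type*} [Fintype ι] [DecidableEq ι] (N : ℕ) :
    ∀ B : ι → Finset E, (∑ i, (B i).card) ≤ N →
      (∀ I : Finset ι, I.card ≤ r (I.biUnion B)) →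
      ∃ f : ι → E, Function.Injective f ∧ (∀ i, f i ∈ B i) ∧
        r (Finset.univ.image f) = (Finset.univ.image f).card := by
  induction N with
  | zero =>
    intro B hN hcond
    refine rado_base r hle B (fun i => ?_) hcond
    have : (B i).card ≤ ∑ j, (B j).card := Finset.single_le_sum (f := fun j => (B j).card) (fun j _ => Nat.zero_le _) (Finset.mem_univ i)
    omega
  | succ N ih =>
    intro B hN hcond
    by_cases hsmall : ∀ i, (B i).card ≤ 1
    · exact rado_base r hle B hsmall hcond
    · push_neg at hsmall
      obtain ⟨i, hi2⟩ := hsmall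
      obtain ⟨x, hx, y, hy, hxy⟩ := Finset.one_lt_card.mp hi2
      -- the two candidate shrunk families
      set Bx : ι → Finset E := fun j => if j = i then (B i).erase x else B j with hBx
      set By : ι → Finset E := fun j => if j = i then (B i).erase y else B j with hBy
      -- one of them satisfies the condition
      have key : (∀ I : Finset ι, I.card ≤ r (I.biUnion Bx)) ∨
          (∀ I : Finset ι, I.card ≤ r (I.biUnion By)) := by
        by_contra hcon
        push_neg at hcon
        obtain ⟨⟨I, hI⟩, ⟨J, hJ⟩⟩ := hcon
        -- i must belong to I and to J
        have hiI : i ∈ I := by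
          by_contra h
          have : I.biUnion Bx = I.biUnion B :=
            Finset.biUnion_congr rfl (fun j hj => by
              have hji : j ≠ i := fun hji => h (hji ▸ hj)
              simp [hBx, hji])
          rw [this] at hI
          exact absurd (hcond I) (not_le.mpr hI)
        have hiJ : i ∈ J := by
          by_contra h
          have : J.biUnion By = J.biUnion B :=
            Finset.biUnion_congr rfl (fun j hj => by
              have hji : j ≠ i := fun hji => h (hji ▸ hj)
              simp [hBy, hji])
          rw [this] at hJ
          exact absurd (hcond J) (not_le.mpr hJ)
        set X := I.biUnion Bx with hX
        set Y := J.biUnion By with hY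
        have hXY1 : (I ∪ J).biUnion B ⊆ X ∪ Y := by
          intro e he
          simp only [Finset.mem_biUnion, Finset.mem_union] at he
          obtain ⟨j, hj, hej⟩ := he
          by_cases hji : j = i
          · subst hji
            by_cases hex : e = x
            · subst hex
              refine Finset.mem_union_right _ ?_
              exact Finset.mem_biUnion.mpr ⟨j, hiJ, by simp [hBy, Finset.mem_erase, hxy, hej]⟩
            · refine Finset.mem_union_left _ ?_
              exact Finset.mem_biUnion.mpr ⟨j, hiI, by simp [hBx, Finset.mem_erase, hex, hej]⟩
          · rcases hj with hj | hj
            · exact Finset.mem_union_left _ (Finset.mem_biUnion.mpr ⟨j, hj, by simp [hBx, if_neg hji, hej]⟩)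
            · exact Finset.mem_union_right _ (Finset.mem_biUnion.mpr ⟨j, hj, by simp [hBy, if_neg hji, hej]⟩)
        have hXY2 : ((I ∩ J).erase i).biUnion B ⊆ X ∩ Y := by
          intro e he
          simp only [Finset.mem_biUnion, Finset.mem_erase, Finset.mem_inter] at he
          obtain ⟨j, ⟨hji, hjI, hjJ⟩, hej⟩ := he
          refine Finset.mem_inter.mpr ⟨?_, ?_⟩
          · exact Finset.mem_biUnion.mpr ⟨j, hjI, by simp [hBx, if_neg hji, hej]⟩
          · exact Finset.mem_biUnion.mpr ⟨j, hjJ, by simp [hBy, if_neg hji, hej]⟩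
        have h1 : (I ∪ J).card ≤ r (X ∪ Y) := (hcond _).trans (hmono _ _ hXY1)
        have h2 : ((I ∩ J).erase i).card ≤ r (X ∩ Y) := (hcond _).trans (hmono _ _ hXY2)
        have h3 := hsub X Y
        have h4 : (I ∪ J).card + (I ∩ J).card = I.card + J.card :=
          Finset.card_union_add_card_inter I J
        have h5 : ((I ∩ J).erase i).card = (I ∩ J).card - 1 :=
          Finset.card_erase_of_mem (Finset.mem_inter.mpr ⟨hiI, hiJ⟩)
        have h6 : 1 ≤ (I ∩ J).card :=
          Finset.card_pos.mpr ⟨i, Finset.mem_inter.mpr ⟨hiI, hiJ⟩⟩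
        omega
      -- recurse
      have hsumx : ∑ j, (Bx j).card < ∑ j, (B j).card := by
        refine Finset.sum_lt_sum (fun j _ => ?_) ⟨i, Finset.mem_univ i, ?_⟩
        · by_cases hji : j = i
          · subst hji; simp [hBx, Finset.card_erase_of_mem hx]
          · simp [hBx, if_neg hji]
        · simp only [hBx, if_pos rfl]
          rw [Finset.card_erase_of_mem hx]
          omega
      have hsumy : ∑ j, (By j).card < ∑ j, (B j).card := by
        refine Finset.sum_lt_sum (fun j _ => ?_) ⟨i, Finset.mem_univ i, ?_⟩
        · by_cases hji : j = i
          · subst hji; simp [hBy, Finset.card_erase_of_mem hy]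
          · simp [hBy, if_neg hji]
        · simp only [hBy, if_pos rfl]
          rw [Finset.card_erase_of_mem hy]
          omega
      rcases key with hk | hk
      · obtain ⟨f, hfinj, hfmem, hfr⟩ := ih Bx (by omega) hk
        refine ⟨f, hfinj, fun j => ?_, hfr⟩
        have := hfmem j
        by_cases hji : j = i
        · subst hji; simp only [hBx, if_pos rfl] at this
          exact Finset.mem_of_mem_erase this
        · simpa [hBx, if_neg hji] using this
      · obtain ⟨f, hfinj, hfmem, hfr⟩ := ih By (by omega) hk
        refine ⟨f, hfinj, fun j => ?_, hfr⟩
        have := hfmem j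
        by_cases hji : j = i
        · subst hji; simp only [hBy, if_pos rfl] at this
          exact Finset.mem_of_mem_erase this
        · simpa [hBy, if_neg hji] using this

theorem rado_hall {E : Type*} [Fintype E] [DecidableEq E]
    (r : Finset E → ℕ)
    (hle : ∀ A : Finset E, r A ≤ A.card)
    (hmono : ∀ A B : Finset E, A ⊆ B → r A ≤ r B)
    (hsub : ∀ A B : Finset E, r (A ∪ B) + r (A ∩ B) ≤ r A + r B)
    (n : ℕ) (A : Fin n → Finset E) (ℓ : Fin n → ℕ) :
    (∃ a : Fin n → Finset E,
        (∀ i, a i ⊆ A i) ∧ (∀ i, (a i).card = ℓ i) ∧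
        (∀ i j, i ≠ j → Disjoint (a i) (a j)) ∧
        r (Finset.univ.biUnion a) = (Finset.univ.biUnion a).card) ↔
      ∀ I : Finset (Fin n), ∑ i ∈ I, ℓ i ≤ r (I.biUnion A) := by
  constructor
  · rintro ⟨a, hsub', hcard, hdisj, hindep⟩ I
    have h1 : I.biUnion a ⊆ Finset.univ.biUnion a :=
      Finset.biUnion_subset_biUnion_of_subset_left a (Finset.subset_univ I)
    have h2 : r (I.biUnion a) = (I.biUnion a).card :=
      indep_subset r hle hsub h1 hindep
    have h3 : (I.biUnion a).card = ∑ i ∈ I, ℓ i := by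
      rw [Finset.card_biUnion (fun i _ j _ hij => hdisj i j hij)]
      exact Finset.sum_congr rfl (fun i _ => hcard i)
    have h4 : I.biUnion a ⊆ I.biUnion A := by
      intro e he
      obtain ⟨i, hi, hei⟩ := Finset.mem_biUnion.mp he
      exact Finset.mem_biUnion.mpr ⟨i, hi, hsub' i hei⟩
    calc ∑ i ∈ I, ℓ i = r (I.biUnion a) := by rw [h2, h3]
      _ ≤ r (I.biUnion A) := hmono _ _ h4
  · intro hcond
    set ι := Σ i : Fin n, Fin (ℓ i) with hι
    set B : ι → Finset E := fun p => A p.1 with hB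
    have hcond' : ∀ I : Finset ι, I.card ≤ r (I.biUnion B) := by
      intro I
      set I' : Finset (Fin n) := I.image Sigma.fst with hI'
      have heq : I.biUnion B = I'.biUnion A := by
        rw [hI', Finset.image_biUnion]
      have hsub2 : I ⊆ I'.sigma (fun i => (Finset.univ : Finset (Fin (ℓ i)))) := by
        intro p hp
        rw [Finset.mem_sigma]
        exact ⟨Finset.mem_image_of_mem _ hp, Finset.mem_univ _⟩
      have hcard2 : I.card ≤ ∑ i ∈ I', ℓ i := by
        calc I.card ≤ (I'.sigma (fun i => (Finset.univ : Finset (Fin (ℓ i))))).card :=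
              Finset.card_le_card hsub2
          _ = ∑ i ∈ I', ℓ i := by
              rw [Finset.card_sigma]
              exact Finset.sum_congr rfl (fun i _ => by simp)
      calc I.card ≤ ∑ i ∈ I', ℓ i := hcard2
        _ ≤ r (I'.biUnion A) := hcond I'
        _ = r (I.biUnion B) := by rw [heq]
    obtain ⟨f, hfinj, hfmem, hfr⟩ :=
      rado_sdr_aux r hle hmono hsub (∑ i, (B i).card) B le_rfl hcond'
    refine ⟨fun i => (Finset.univ : Finset (Fin (ℓ i))).image (fun k => f ⟨i, k⟩),
      fun i => ?_, fun i => ?_, fun i j hij => ?_, ?_⟩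
    · intro e he
      obtain ⟨k, _, rfl⟩ := Finset.mem_image.mp he
      exact hfmem ⟨i, k⟩
    · rw [Finset.card_image_of_injective _ (fun k k' h => by
        have := hfinj h
        exact (Sigma.mk.inj_iff.mp this).2.eq)]
      simp
    · rw [Finset.disjoint_left]
      rintro e he he'
      obtain ⟨k, _, rfl⟩ := Finset.mem_image.mp he
      obtain ⟨k', _, hk'⟩ := Finset.mem_image.mp he'
      have := hfinj hk'
      exact hij ((Sigma.mk.inj_iff.mp this).1.symm)
    · have himg : Finset.univ.biUnion
          (fun i => (Finset.univ : Finset (Fin (ℓ i))).image (fun k => f ⟨i, k⟩)) =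
          Finset.univ.image f := by
        ext e
        simp only [Finset.mem_biUnion, Finset.mem_image, Finset.mem_univ, true_and]
        constructor
        · rintro ⟨i, k, rfl⟩; exact ⟨⟨i, k⟩, rfl⟩
        · rintro ⟨⟨i, k⟩, rfl⟩; exact ⟨i, k, rfl⟩
      rw [himg]
      exact hfr
end

section
/- Special case of the block-matrix transversal theorem with rows partitioned (m arbitrary) and columns trivially partitioned (n = 1, t₁ = R): there exist subsets 𝐬ᵢ ⊆ Sᵢ with |𝐬ᵢ| = sᵢ (Σ sᵢ = R) and a set 𝐭 ⊆ T with |𝐭| = R such that G(⋃𝐬ᵢ, 𝐭) is nonsingular, if and only if for every I ⊆ {1,…,m}, rank(G(⋃_{i∈I} Sᵢ, T)) ≥ Σ_{i∈I} sᵢ. -/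
set_option linter.unusedSectionVars false
set_option linter.unusedVariables false
set_option maxHeartbeats 1000000

section RowRank

open Module Submodule Matrix

variable {F S T : Type*} [Field F] [Fintype S] [Fintype T]

/-- The dimension of the span of the rows of `G` indexed by `U`. -/
noncomputable def rowRank (G : Matrix S T F) (U : Finset S) : ℕ :=
  Module.finrank F (Submodule.span F ((fun i => G i) '' (U : Set S)))

lemma rowRank_mono (G : Matrix S T F) {U V : Finset S} (h : U ⊆ V) :
    rowRank G U ≤ rowRank G V :=
  Submodule.finrank_mono (Submodule.span_mono (Set.image_mono h))

lemma rowRank_le_card (G : Matrix S T F) (U : Finset S) : rowRank G U ≤ U.card := by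
  classical
  rw [rowRank, ← Finset.coe_image]
  exact le_trans (by simpa [Set.finrank] using
    finrank_span_finset_le_card (R := F) (U.image fun i => G i)) Finset.card_image_le

lemma rowRank_submodular (G : Matrix S T F) [DecidableEq S] (A B : Finset S) :
    rowRank G (A ∪ B) + rowRank G (A ∩ B) ≤ rowRank G A + rowRank G B := by
  have h1 : Submodule.span F ((fun i => G i) '' ((A ∪ B : Finset S) : Set S))
      = Submodule.span F ((fun i => G i) '' (A : Set S))
        ⊔ Submodule.span F ((fun i => G i) '' (B : Set S)) := by
    rw [Finset.coe_union, Set.image_union, Submodule.span_union]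
  have h2 : Submodule.span F ((fun i => G i) '' ((A ∩ B : Finset S) : Set S))
      ≤ Submodule.span F ((fun i => G i) '' (A : Set S))
        ⊓ Submodule.span F ((fun i => G i) '' (B : Set S)) := by
    rw [Finset.coe_inter]
    exact le_inf (Submodule.span_mono (Set.image_mono Set.inter_subset_left))
      (Submodule.span_mono (Set.image_mono Set.inter_subset_right))
  calc rowRank G (A ∪ B) + rowRank G (A ∩ B)
      ≤ finrank F ↥(Submodule.span F ((fun i => G i) '' (A : Set S))
          ⊔ Submodule.span F ((fun i => G i) '' (B : Set S)))
        + finrank F ↥(Submodule.span F ((fun i => G i) '' (A : Set S))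
          ⊓ Submodule.span F ((fun i => G i) '' (B : Set S))) := by
        rw [rowRank, rowRank, h1]
        exact Nat.add_le_add le_rfl (Submodule.finrank_mono h2)
    _ = rowRank G A + rowRank G B :=
        Submodule.finrank_sup_add_finrank_inf_eq _ _

lemma finrank_span_range_comp_lequiv {V W κ : Type*} [AddCommGroup V] [Module F V]
    [AddCommGroup W] [Module F W] (ψ : V ≃ₗ[F] W) (g : κ → V) :
    finrank F (Submodule.span F (Set.range fun i => ψ (g i)))
      = finrank F (Submodule.span F (Set.range g)) := by
  have h : Set.range (fun i => ψ (g i)) = ψ '' Set.range g := by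
    rw [← Set.range_comp]; rfl
  rw [h]
  have := LinearEquiv.finrank_map_eq ψ (span F (Set.range g))
  rw [Submodule.map_span] at this
  exact this

lemma rk_univ_eq_rowRank (G : Matrix S T F) (U : Finset S) :
    rk G U Finset.univ = rowRank G U := by
  classical
  rw [rk, Matrix.rank_eq_finrank_span_row]
  let e : ((Finset.univ : Finset T) : Finset T) ≃ T :=
    Equiv.subtypeUnivEquiv fun x => Finset.mem_univ x
  let ψ : (T → F) ≃ₗ[F] (((Finset.univ : Finset T) : Finset T) → F) :=
    LinearEquiv.funCongrLeft F F e
  have hsub : (G.submatrix (fun i : U => (i : S))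
      (fun j : ((Finset.univ : Finset T) : Finset T) => (j : T)))
      = fun u : U => ψ (G (u : S)) := by
    funext u j
    rfl
  rw [Matrix.row, hsub, finrank_span_range_comp_lequiv ψ (fun u : U => G (u : S)), rowRank]
  have hset : (Set.range fun u : U => G (u : S)) = (fun i => G i) '' (U : Set S) := by
    ext w
    constructor
    · rintro ⟨u, rfl⟩; exact ⟨↑u, u.2, rfl⟩
    · rintro ⟨i, hi, rfl⟩; exact ⟨⟨i, hi⟩, rfl⟩
  rw [hset]

end RowRank

section Rado

open Module Submodule Matrix

variable {F S T ι : Type*} [Field F] [Fintype S] [Fintype T] [Fintype ι] [DecidableEq ι]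
  [DecidableEq S]

lemma rado_aux (G : Matrix S T F) :
    ∀ (n : ℕ) (A : ι → Finset S), (∑ i, (A i).card = n) →
      (∀ J : Finset ι, J.card ≤ rowRank G (J.biUnion A)) →
      ∃ f : ι → S, (∀ i, f i ∈ A i) ∧ LinearIndependent F fun i => G (f i) := by
  intro n
  induction n using Nat.strong_induction_on with
  | _ n IH =>
    intro A hn h
    by_cases hbig : ∃ i, 2 ≤ (A i).card
    · obtain ⟨i0, hi0⟩ := hbig
      obtain ⟨x, hx, y, hy, hxy⟩ := Finset.one_lt_card.mp hi0
      have main : ∀ z, z ∈ A i0 →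
          (∀ J : Finset ι,
            J.card ≤ rowRank G (J.biUnion (Function.update A i0 (A i0 \ {z})))) →
          ∃ f : ι → S, (∀ i, f i ∈ A i) ∧ LinearIndependent F fun i => G (f i) := by
        intro z hz hdz
        set Az := Function.update A i0 (A i0 \ {z}) with hAz
        have hlt : ∑ i, (Az i).card < n := by
          rw [← hn]
          have key : ∀ B : ι → Finset S, ∑ i, (B i).card
              = (B i0).card + ∑ i ∈ Finset.univ.erase i0, (B i).card := fun B => by
            rw [← Finset.add_sum_erase _ _ (Finset.mem_univ i0)]
          have heq : ∑ i ∈ Finset.univ.erase i0, (Az i).card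
              = ∑ i ∈ Finset.univ.erase i0, (A i).card :=
            Finset.sum_congr rfl fun i hi => by
              rw [hAz, Function.update_of_ne (Finset.ne_of_mem_erase hi)]
          have hz0 : (Az i0).card = (A i0).card - 1 := by
            rw [hAz, Function.update_self,
              Finset.card_sdiff_of_subset (by simpa using hz), Finset.card_singleton]
          rw [key Az, key A, heq, hz0]
          omega
        obtain ⟨f, hf1, hf2⟩ := IH _ hlt Az rfl hdz
        refine ⟨f, fun i => ?_, hf2⟩
        have := hf1 i
        by_cases hii : i = i0
        · subst hii
          rw [hAz, Function.update_self] at this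
          exact (Finset.mem_sdiff.mp this).1
        · rwa [hAz, Function.update_of_ne hii] at this
      by_cases hdx : ∀ J : Finset ι,
          J.card ≤ rowRank G (J.biUnion (Function.update A i0 (A i0 \ {x})))
      · exact main x hx hdx
      by_cases hdy : ∀ J : Finset ι,
          J.card ≤ rowRank G (J.biUnion (Function.update A i0 (A i0 \ {y})))
      · exact main y hy hdy
      exfalso
      push_neg at hdx hdy
      obtain ⟨Jx, hJx⟩ := hdx
      obtain ⟨Jy, hJy⟩ := hdy
      set Ax := Function.update A i0 (A i0 \ {x}) with hAxd
      set Ay := Function.update A i0 (A i0 \ {y}) with hAyd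
      have hi0x : i0 ∈ Jx := by
        by_contra hc
        have heq : Jx.biUnion Ax = Jx.biUnion A :=
          Finset.biUnion_congr rfl fun i hi => by
            rw [hAxd, Function.update_of_ne (by rintro rfl; exact hc hi)]
        rw [heq] at hJx
        exact absurd (h Jx) (not_le.mpr hJx)
      have hi0y : i0 ∈ Jy := by
        by_contra hc
        have heq : Jy.biUnion Ay = Jy.biUnion A :=
          Finset.biUnion_congr rfl fun i hi => by
            rw [hAyd, Function.update_of_ne (by rintro rfl; exact hc hi)]
        rw [heq] at hJy
        exact absurd (h Jy) (not_le.mpr hJy)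
      have hPQu : (Jx ∪ Jy).biUnion A ⊆ Jx.biUnion Ax ∪ Jy.biUnion Ay := by
        intro w hw
        obtain ⟨i, hi, hwi⟩ := Finset.mem_biUnion.mp hw
        by_cases hii : i = i0
        · have hwi0 : w ∈ A i0 := by rwa [hii] at hwi
          by_cases hwx : w = x
          · refine Finset.mem_union_right _ (Finset.mem_biUnion.mpr ⟨i0, hi0y, ?_⟩)
            rw [hAyd, Function.update_self]
            exact Finset.mem_sdiff.mpr ⟨hwi0, by simp [hwx, hxy]⟩
          · refine Finset.mem_union_left _ (Finset.mem_biUnion.mpr ⟨i0, hi0x, ?_⟩)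
            rw [hAxd, Function.update_self]
            exact Finset.mem_sdiff.mpr ⟨hwi0, by simpa using hwx⟩
        · rcases Finset.mem_union.mp hi with h' | h'
          · refine Finset.mem_union_left _ (Finset.mem_biUnion.mpr ⟨i, h', ?_⟩)
            rw [hAxd, Function.update_of_ne hii]; exact hwi
          · refine Finset.mem_union_right _ (Finset.mem_biUnion.mpr ⟨i, h', ?_⟩)
            rw [hAyd, Function.update_of_ne hii]; exact hwi
      have hPQi : ((Jx ∩ Jy).erase i0).biUnion A ⊆ Jx.biUnion Ax ∩ Jy.biUnion Ay := by
        intro w hw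
        obtain ⟨i, hi, hwi⟩ := Finset.mem_biUnion.mp hw
        have hii : i ≠ i0 := Finset.ne_of_mem_erase hi
        have hmem := Finset.mem_of_mem_erase hi
        refine Finset.mem_inter.mpr
          ⟨Finset.mem_biUnion.mpr ⟨i, (Finset.mem_inter.mp hmem).1, ?_⟩,
           Finset.mem_biUnion.mpr ⟨i, (Finset.mem_inter.mp hmem).2, ?_⟩⟩
        · rw [hAxd, Function.update_of_ne hii]; exact hwi
        · rw [hAyd, Function.update_of_ne hii]; exact hwi
      have h1 := h (Jx ∪ Jy)
      have h2 := h ((Jx ∩ Jy).erase i0)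
      have m1 := rowRank_mono G hPQu
      have m2 := rowRank_mono G hPQi
      have sub := rowRank_submodular G (Jx.biUnion Ax) (Jy.biUnion Ay)
      have hcards := Finset.card_union_add_card_inter Jx Jy
      have hmem0 : i0 ∈ Jx ∩ Jy := Finset.mem_inter.mpr ⟨hi0x, hi0y⟩
      have herase : ((Jx ∩ Jy).erase i0).card = (Jx ∩ Jy).card - 1 :=
        Finset.card_erase_of_mem hmem0
      have hpos : 1 ≤ (Jx ∩ Jy).card := Finset.card_pos.mpr ⟨i0, hmem0⟩
      omega
    · -- base case: all `A i` are singletons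
      push_neg at hbig
      have hone : ∀ i, (A i).card = 1 := by
        intro i
        have h1 : 1 ≤ rowRank G (A i) := by
          simpa using h {i}
        have h2 := rowRank_le_card G (A i)
        have h3 := hbig i
        omega
      have hex : ∀ i, ∃ x, A i = {x} := fun i => Finset.card_eq_one.mp (hone i)
      choose f hfx using hex
      refine ⟨f, fun i => by rw [hfx i]; exact Finset.mem_singleton_self _, ?_⟩
      rw [linearIndependent_iff_card_eq_finrank_span]
      have hU : Finset.univ.biUnion A = Finset.univ.image f := by
        ext z
        simp [hfx, eq_comm]
      have hge : Fintype.card ι ≤ finrank F (span F (Set.range fun i => G (f i))) := by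
        have := h Finset.univ
        rw [hU] at this
        have hset : ((fun i => G i) '' ((Finset.univ.image f : Finset S) : Set S))
            = Set.range fun i => G (f i) := by
          rw [Finset.coe_image, Finset.coe_univ, Set.image_univ, ← Set.range_comp]
          rfl
        rw [rowRank, hset] at this
        simpa using this
      have hle := finrank_range_le_card (R := F) fun i => G (f i)
      rw [Set.finrank] at hle ⊢
      omega

end Rado

section Cols

open Module Submodule Matrix

variable {F S T : Type*} [Field F] [Fintype S] [Fintype T] [DecidableEq S]

lemma exists_nonsingular_cols (G : Matrix S T F) (U : Finset S)
    (hU : LinearIndependent F fun u : U => G (u : S)) :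
    ∃ b : Finset T, b.card = U.card ∧ IsNonsingularSub G U b := by
  classical
  set M : Matrix U T F := Matrix.of fun (u : U) t => G (u : S) t with hM
  have hMrows : LinearIndependent F fun u : U => M u := hU
  have hrank : M.rank = U.card := by
    rw [hMrows.rank_matrix, Fintype.card_coe]
  have hspan : finrank F (span F (Set.range Mᵀ)) = U.card := by
    rw [show Set.range Mᵀ = Set.range Mᵀ.row from rfl, ← Matrix.rank_eq_finrank_span_row Mᵀ, Matrix.rank_transpose, hrank]
  obtain ⟨bs, hbsub, hbspan, hbind⟩ := exists_linearIndependent F (Set.range Mᵀ)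
  haveI : Fintype bs := (Set.Finite.subset (Set.finite_range Mᵀ) hbsub).fintype
  have hbcard : bs.toFinset.card = U.card := by
    rw [← finrank_span_set_eq_card hbind, hbspan, hspan]
  have hsel : ∀ v : bs, ∃ j : T, Mᵀ j = (v : U → F) := fun v => hbsub v.2
  choose jm hjm using hsel
  have hjinj : Function.Injective jm := by
    intro v w hvw
    apply Subtype.ext
    rw [← hjm v, ← hjm w, hvw]
  set b : Finset T := Finset.image jm Finset.univ with hb
  have hbcard2 : b.card = U.card := by
    rw [hb, Finset.card_image_of_injective _ hjinj, Finset.card_univ,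
      ← Set.toFinset_card, hbcard]
  have hmemb : ∀ v : bs, jm v ∈ b := fun v => Finset.mem_image_of_mem _ (Finset.mem_univ v)
  set g : bs → (b : Finset T) := fun v => ⟨jm v, hmemb v⟩ with hg
  have hginj : Function.Injective g := fun v w h' => hjinj (congrArg Subtype.val h')
  have hgbij : Function.Bijective g := by
    refine (Fintype.bijective_iff_injective_and_card g).mpr ⟨hginj, ?_⟩
    rw [Fintype.card_coe, hbcard2, ← Set.toFinset_card, hbcard]
  let e2 : bs ≃ (b : Finset T) := Equiv.ofBijective g hgbij
  have hcols : LinearIndependent F fun t : (b : Finset T) => Mᵀ (t : T) := by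
    have heqf : (fun t : (b : Finset T) => Mᵀ (t : T))
        = (fun v : bs => (v : U → F)) ∘ e2.symm := by
      funext t
      calc Mᵀ ↑t = Mᵀ ↑(e2 (e2.symm t)) := by rw [Equiv.apply_symm_apply]
        _ = ↑(e2.symm t) := hjm _
    rw [heqf]
    exact hbind.comp _ e2.symm.injective
  have hcardUb : Fintype.card (U : Finset S) = Fintype.card (b : Finset T) := by
    rw [Fintype.card_coe, Fintype.card_coe, hbcard2]
  let e : (U : Finset S) ≃ (b : Finset T) := Fintype.equivOfCardEq hcardUb
  refine ⟨b, hbcard2, e, ?_⟩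
  set N := (G.submatrix (fun i : U => (i : S)) (fun j : (b : Finset T) => (j : T))).submatrix id e
    with hN
  have hNcols : LinearIndependent F fun u' : U => Nᵀ u' := by
    have heqf : (fun u' : U => Nᵀ u') = (fun t : (b : Finset T) => Mᵀ (t : T)) ∘ e := by
      funext u' u
      rfl
    rw [heqf]
    exact hcols.comp _ e.injective
  have hunit : IsUnit N := Matrix.linearIndependent_cols_iff_isUnit.mp hNcols
  exact isUnit_iff_ne_zero.mp ((Matrix.isUnit_iff_isUnit_det N).mp hunit)

end Cols

open Module Submodule

theorem block_matrix_transversal_rows {F S T : Type*} [Field F] [Fintype S] [Fintype T]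
    [DecidableEq S]
    (G : Matrix S T F) (m : ℕ) (Sp : Fin m → Finset S)
    (hSdisj : ∀ i j, i ≠ j → Disjoint (Sp i) (Sp j))
    (hScover : Finset.univ.biUnion Sp = (Finset.univ : Finset S))
    (s : Fin m → ℕ) (R : ℕ) (hs : ∑ i, s i = R) :
    (∃ (a : Fin m → Finset S) (b : Finset T),
        (∀ i, a i ⊆ Sp i) ∧ (∀ i, (a i).card = s i) ∧ b.card = R ∧
        IsNonsingularSub G (Finset.univ.biUnion a) b) ↔
      ∀ I : Finset (Fin m), ∑ i ∈ I, s i ≤ rk G (I.biUnion Sp) Finset.univ := by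
  classical
  constructor
  · rintro ⟨a, b, hsub, hcard, hbcard, hns⟩ I
    set U := Finset.univ.biUnion a with hUdef
    obtain ⟨e, hdet⟩ := hns
    have hunit : IsUnit ((G.submatrix (fun i : U => (i : S))
        (fun j : b => (j : T))).submatrix id e) :=
      (Matrix.isUnit_iff_isUnit_det _).mpr (isUnit_iff_ne_zero.mpr hdet)
    have hrowsN : LinearIndependent F fun u : U =>
        ((G.submatrix (fun i : U => (i : S)) (fun j : b => (j : T))).submatrix id e) u :=
      Matrix.linearIndependent_rows_iff_isUnit.mpr hunit
    have hrowsU : LinearIndependent F fun u : U => G (u : S) := by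
      refine LinearIndependent.of_comp
        (LinearMap.funLeft F F fun u' : U => ((e u' : b) : T)) ?_
      exact hrowsN
    set W := I.biUnion a with hW
    have hWU : W ⊆ U := by
      intro z hz
      obtain ⟨i, _, hzi⟩ := Finset.mem_biUnion.mp hz
      exact Finset.mem_biUnion.mpr ⟨i, Finset.mem_univ i, hzi⟩
    have hrowsW : LinearIndependent F fun w : W => G (w : S) :=
      hrowsU.comp (fun w : W => (⟨(w : S), hWU w.2⟩ : U)) (by
        intro v w h'
        exact Subtype.ext (by simpa [Subtype.mk.injEq] using h'))
    have hWrank : W.card ≤ rowRank G W := by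
      have h1 := finrank_span_eq_card hrowsW
      rw [rowRank]
      have hset : (fun i => G i) '' (W : Set S) = Set.range fun w : W => G (w : S) := by
        ext v
        constructor
        · rintro ⟨i, hi, rfl⟩; exact ⟨⟨i, hi⟩, rfl⟩
        · rintro ⟨w, rfl⟩; exact ⟨↑w, w.2, rfl⟩
      rw [hset, h1, Fintype.card_coe]
    have hcardW : W.card = ∑ i ∈ I, s i := by
      rw [hW, Finset.card_biUnion]
      · exact Finset.sum_congr rfl fun i _ => hcard i
      · exact fun i _ j _ hij => (hSdisj i j hij).mono (hsub i) (hsub j)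
    have hWSp : W ⊆ I.biUnion Sp := by
      intro z hz
      obtain ⟨i, hi, hzi⟩ := Finset.mem_biUnion.mp hz
      exact Finset.mem_biUnion.mpr ⟨i, hi, hsub i hzi⟩
    rw [rk_univ_eq_rowRank]
    calc ∑ i ∈ I, s i = W.card := hcardW.symm
      _ ≤ rowRank G W := hWrank
      _ ≤ rowRank G (I.biUnion Sp) := rowRank_mono G hWSp
  · intro hcond
    have hradocond : ∀ J : Finset ((i : Fin m) × Fin (s i)),
        J.card ≤ rowRank G (J.biUnion fun p => Sp p.1) := by
      intro J
      set I := J.image Sigma.fst with hI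
      have hsubJ : J ⊆ I.sigma fun _ => Finset.univ := fun p hp =>
        Finset.mem_sigma.mpr ⟨Finset.mem_image_of_mem _ hp, Finset.mem_univ _⟩
      have hc1 : J.card ≤ ∑ i ∈ I, s i := by
        simpa [Finset.card_sigma] using Finset.card_le_card hsubJ
      have hbeq : J.biUnion (fun p => Sp p.1) = I.biUnion Sp := by
        ext z
        simp only [Finset.mem_biUnion, hI, Finset.mem_image]
        constructor
        · rintro ⟨p, hp, hz⟩; exact ⟨p.1, ⟨p, hp, rfl⟩, hz⟩
        · rintro ⟨i, ⟨p, hp, rfl⟩, hz⟩; exact ⟨p, hp, hz⟩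
      rw [hbeq]
      calc J.card ≤ ∑ i ∈ I, s i := hc1
        _ ≤ rk G (I.biUnion Sp) Finset.univ := hcond I
        _ = rowRank G (I.biUnion Sp) := rk_univ_eq_rowRank G _
    obtain ⟨f, hfmem, hfind⟩ :=
      rado_aux G (∑ p : (i : Fin m) × Fin (s i), (Sp p.1).card)
        (fun p : (i : Fin m) × Fin (s i) => Sp p.1) rfl hradocond
    have hfinj : Function.Injective f := by
      intro p q hpq
      exact hfind.injective (congrArg G hpq)
    set a : Fin m → Finset S :=
      fun i => Finset.image (fun k : Fin (s i) => f ⟨i, k⟩) Finset.univ with ha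
    have hasub : ∀ i, a i ⊆ Sp i := by
      intro i z hz
      obtain ⟨k, _, rfl⟩ := Finset.mem_image.mp hz
      exact hfmem ⟨i, k⟩
    have hainj : ∀ i, Function.Injective fun k : Fin (s i) => f ⟨i, k⟩ := by
      intro i k l hkl
      have h2 := hfinj hkl
      exact heq_iff_eq.mp (Sigma.mk.inj_iff.mp h2).2
    have hacard : ∀ i, (a i).card = s i := fun i => by
      rw [ha, Finset.card_image_of_injective _ (hainj i), Finset.card_univ, Fintype.card_fin]
    set U := Finset.univ.biUnion a with hU
    have hUeq : U = Finset.univ.image f := by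
      ext z
      constructor
      · intro hz
        obtain ⟨i, -, hz⟩ := Finset.mem_biUnion.mp hz
        obtain ⟨k, -, rfl⟩ := Finset.mem_image.mp hz
        exact Finset.mem_image.mpr ⟨⟨i, k⟩, Finset.mem_univ _, rfl⟩
      · intro hz
        obtain ⟨p, -, rfl⟩ := Finset.mem_image.mp hz
        exact Finset.mem_biUnion.mpr ⟨p.1, Finset.mem_univ _,
          Finset.mem_image.mpr ⟨p.2, Finset.mem_univ _, rfl⟩⟩
    have hUcard : U.card = R := by
      rw [hUeq, Finset.card_image_of_injective _ hfinj, Finset.card_univ]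
      simpa [Fintype.card_sigma] using hs
    have hmemU : ∀ p, f p ∈ U := fun p => by
      rw [hUeq]; exact Finset.mem_image_of_mem _ (Finset.mem_univ p)
    have hgbij : Function.Bijective
        (fun p : (i : Fin m) × Fin (s i) => (⟨f p, hmemU p⟩ : (U : Finset S))) := by
      refine (Fintype.bijective_iff_injective_and_card _).mpr
        ⟨fun p q h' => hfinj (congrArg Subtype.val h'), ?_⟩
      rw [Fintype.card_coe, hUcard]
      simpa [Fintype.card_sigma] using hs
    let eg := Equiv.ofBijective _ hgbij
    have hrowsU : LinearIndependent F fun u : (U : Finset S) => G (u : S) := by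
      have heqf : (fun u : (U : Finset S) => G (u : S))
          = (fun p : (i : Fin m) × Fin (s i) => G (f p)) ∘ eg.symm := by
        funext u
        have h3 : f (eg.symm u) = ((eg (eg.symm u) : (U : Finset S)) : S) := rfl
        simp only [Function.comp_apply]
        rw [h3, Equiv.apply_symm_apply]
      rw [heqf]
      exact hfind.comp _ eg.symm.injective
    obtain ⟨b, hbcard, hns⟩ := exists_nonsingular_cols G U hrowsU
    exact ⟨a, b, hasub, hacard, by rw [hbcard, hUcard], hns⟩
end
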